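/- arXiv:2412.00376 — 6 statements merged into one kernel-verified Lean document; each statement's English description precedes it below -/
import Mathlib

section
/- Let α ∈ (1,2) and β > 0. Then ∫_0^∞ [1 − (1+z)^{−β}] z μ_α(dz) = αβΓ(α+β−1)/(Γ(α)Γ(β+1)). -/
open MeasureTheory Set Real Filter


lemma realBeta (u v : ℝ) (hu : 0 < u) (hv : 0 < v) :
    ∫ x in Ioo (0:ℝ) 1, x ^ (u-1) * (1-x) ^ (v-1)
      = Real.Gamma u * Real.Gamma v / Real.Gamma (u+v) := by
  have key := Complex.Gamma_mul_Gamma_eq_betaIntegral (s := (u:ℂ)) (t := (v:ℂ))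
    (by simpa using hu) (by simpa using hv)
  have hB : Complex.betaIntegral (u:ℂ) (v:ℂ)
      = ((∫ x in Ioo (0:ℝ) 1, x ^ (u-1) * (1-x) ^ (v-1) : ℝ) : ℂ) := by
    rw [Complex.betaIntegral, intervalIntegral.integral_of_le zero_le_one,
      ← MeasureTheory.Measure.restrict_congr_set Ioo_ae_eq_Ioc]
    have step : ∫ x in Ioo (0:ℝ) 1, (x:ℂ) ^ ((u:ℂ)-1) * (1-(x:ℂ)) ^ ((v:ℂ)-1)
        = ∫ x in Ioo (0:ℝ) 1, ((x ^ (u-1) * (1-x) ^ (v-1) : ℝ) : ℂ) := by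
      refine setIntegral_congr_fun measurableSet_Ioo fun x hx => ?_
      obtain ⟨hx0, hx1⟩ := hx
      rw [Complex.ofReal_mul, Complex.ofReal_cpow hx0.le, Complex.ofReal_cpow (by linarith)]
      push_cast
      ring
    rw [step]
    exact integral_ofReal
  rw [hB] at key
  have hG : Complex.Gamma ((u:ℂ) + v) = (Real.Gamma (u+v) : ℂ) := by
    rw [← Complex.ofReal_add, Complex.Gamma_ofReal]
  rw [Complex.Gamma_ofReal, Complex.Gamma_ofReal, hG] at key
  have hne : Real.Gamma (u+v) ≠ 0 := (Real.Gamma_pos_of_pos (by linarith)).ne'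
  rw [eq_div_iff hne]
  have h2 : Real.Gamma (u+v) * (∫ x in Ioo (0:ℝ) 1, x ^ (u-1) * (1-x) ^ (v-1))
      = Real.Gamma u * Real.Gamma v := by exact_mod_cast key.symm
  rw [mul_comm] at h2
  exact h2

-- facts about the map g t = t/(1+t) on Ioi 0
lemma deriv_fact : ∀ t ∈ Ioi (0:ℝ), HasDerivWithinAt (fun t : ℝ => t/(1+t))
    (1/(1+t)^2) (Ioi 0) t := by
  intro t ht
  have h1 : (0:ℝ) < 1 + t := by simp at ht; linarith
  have := (hasDerivAt_id t).div ((hasDerivAt_id t).const_add 1) h1.ne'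
  simp only [Pi.div_def, id] at this
  refine this.hasDerivWithinAt.congr_deriv ?_
  ring
lemma inj_fact : InjOn (fun t : ℝ => t/(1+t)) (Ioi 0) := by
  intro a ha b hb h
  simp only [mem_Ioi] at ha hb
  have h1 : (0:ℝ) < 1 + a := by linarith
  have h2 : (0:ℝ) < 1 + b := by linarith
  field_simp at h
  linarith
lemma img_fact : (fun t : ℝ => t/(1+t)) '' (Ioi 0) = Ioo 0 1 := by
  ext y
  simp only [mem_image, mem_Ioi, mem_Ioo]
  constructor
  · rintro ⟨t, ht, rfl⟩
    have h1 : (0:ℝ) < 1 + t := by linarith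
    constructor
    · positivity
    · rw [div_lt_one h1]; linarith
  · rintro ⟨hy0, hy1⟩
    have h1 : (0:ℝ) < 1 - y := by linarith
    refine ⟨y/(1-y), by positivity, ?_⟩
    have h2 : 1 + y/(1-y) = 1/(1-y) := by field_simp; ring
    rw [h2]
    field_simp

lemma betaIoi (u v : ℝ) (hu : 0 < u) (hv : 0 < v) :
    ∫ t in Ioi (0:ℝ), t ^ (u-1) * (1+t) ^ (-u-v)
      = Real.Gamma u * Real.Gamma v / Real.Gamma (u+v) := by
  rw [← realBeta u v hu hv, ← img_fact,
    integral_image_eq_integral_abs_deriv_smul measurableSet_Ioi deriv_fact inj_fact]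
  refine setIntegral_congr_fun measurableSet_Ioi fun t ht => ?_
  simp only [mem_Ioi] at ht
  have h1 : (0:ℝ) < 1 + t := by linarith
  rw [smul_eq_mul, abs_of_pos (by positivity)]
  have e1 : 1 - t/(1+t) = 1/(1+t) := by field_simp; ring
  rw [e1, Real.div_rpow ht.le h1.le, Real.div_rpow (by norm_num) h1.le, one_rpow]
  have key : ((1+t):ℝ) ^ (-u-v) = 1/((1+t)^(2:ℕ) * ((1+t) ^ (u-1) * (1+t) ^ (v-1))) := by
    rw [show -u-v = -(((2:ℕ):ℝ)+((u-1)+(v-1))) by push_cast; ring,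
      Real.rpow_neg h1.le, Real.rpow_add h1, Real.rpow_add h1, Real.rpow_natCast, one_div]
  rw [key]
  have h2 : ((1+t):ℝ) ^ (u-1) ≠ 0 := (Real.rpow_pos_of_pos h1 _).ne'
  have h3 : ((1+t):ℝ) ^ (v-1) ≠ 0 := (Real.rpow_pos_of_pos h1 _).ne'
  field_simp

lemma one_sub_rpow_bounds {β z : ℝ} (hβ : 0 < β) (hz : 0 ≤ z) :
    0 ≤ 1 - (1+z) ^ (-β) ∧ 1 - (1+z) ^ (-β) ≤ β * z := by
  have h1 : (0:ℝ) < 1 + z := by linarith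
  constructor
  · have := Real.rpow_le_one_of_one_le_of_nonpos (by linarith : (1:ℝ) ≤ 1+z)
      (by linarith : -β ≤ 0)
    linarith
  · have hlog : Real.log (1+z) ≤ z := by
      have := Real.log_le_sub_one_of_pos h1
      linarith
    have hexp : 1 - Real.exp (-(β * Real.log (1+z))) ≤ β * Real.log (1+z) := by
      have := Real.add_one_le_exp (-(β * Real.log (1+z)))
      linarith
    have heq : (1+z) ^ (-β) = Real.exp (-(β * Real.log (1+z))) := by
      rw [Real.rpow_def_of_pos h1]
      ring_nf
    rw [heq]
    have hlogpos : 0 ≤ Real.log (1+z) := Real.log_nonneg (by linarith)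
    nlinarith

lemma integ_rpow_one_add (p q : ℝ) (hp : -1 < p) (hq : q ≤ 0) (hpq : p + q < -1) :
    IntegrableOn (fun t : ℝ => t ^ p * (1+t) ^ q) (Ioi 0) := by
  have m1 : Measurable fun t : ℝ => t ^ p * (1+t) ^ q := by
    have : Measurable fun t : ℝ => 1 + t := measurable_const.add measurable_id
    measurability
  rw [show Ioi (0:ℝ) = Ioc 0 1 ∪ Ioi 1 from (Ioc_union_Ioi_eq_Ioi zero_le_one).symm]
  apply IntegrableOn.union
  · have base : IntegrableOn (fun t : ℝ => t ^ p) (Ioc 0 1) := by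
      have := intervalIntegral.intervalIntegrable_rpow' (a := (0:ℝ)) (b := 1) hp
      rwa [intervalIntegrable_iff_integrableOn_Ioc_of_le zero_le_one] at this
    refine base.mono' m1.aestronglyMeasurable.restrict ?_
    filter_upwards [ae_restrict_mem measurableSet_Ioc] with t ht
    obtain ⟨ht0, ht1⟩ := ht
    have hp1 : (0:ℝ) < t ^ p := Real.rpow_pos_of_pos ht0 _
    have hq1 : (1+t) ^ q ≤ 1 :=
      Real.rpow_le_one_of_one_le_of_nonpos (by linarith) hq
    have hq0 : 0 < (1+t:ℝ) ^ q := Real.rpow_pos_of_pos (by linarith) _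
    rw [Real.norm_eq_abs, abs_of_pos (by positivity)]
    nlinarith
  · have base : IntegrableOn (fun t : ℝ => t ^ (p+q)) (Ioi 1) :=
      integrableOn_Ioi_rpow_of_lt hpq one_pos
    refine base.mono' m1.aestronglyMeasurable.restrict ?_
    filter_upwards [ae_restrict_mem measurableSet_Ioi] with t ht
    simp only [mem_Ioi] at ht
    have ht0 : (0:ℝ) < t := by linarith
    have h1 : (1+t:ℝ) ^ q ≤ t ^ q :=
      Real.rpow_le_rpow_of_nonpos ht0 (by linarith) hq
    have hp1 : (0:ℝ) < t ^ p := Real.rpow_pos_of_pos ht0 _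
    have hq0 : 0 < (1+t:ℝ) ^ q := Real.rpow_pos_of_pos (by linarith) _
    rw [Real.norm_eq_abs, abs_of_pos (by positivity), Real.rpow_add ht0]
    exact mul_le_mul_of_nonneg_left h1 hp1.le

lemma integ_main (α β : ℝ) (hα₁ : 1 < α) (hα₂ : α < 2) (hβ : 0 < β) :
    IntegrableOn (fun z : ℝ => (1 - (1+z) ^ (-β)) * z ^ (-α)) (Ioi 0) := by
  have m1 : Measurable fun z : ℝ => (1 - (1+z) ^ (-β)) * z ^ (-α) := by
    have : Measurable fun t : ℝ => 1 + t := measurable_const.add measurable_id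
    measurability
  rw [show Ioi (0:ℝ) = Ioc 0 1 ∪ Ioi 1 from (Ioc_union_Ioi_eq_Ioi zero_le_one).symm]
  apply IntegrableOn.union
  · have base : IntegrableOn (fun t : ℝ => β * t ^ (1-α)) (Ioc 0 1) := by
      have := intervalIntegral.intervalIntegrable_rpow' (a := (0:ℝ)) (b := 1)
        (r := 1-α) (by linarith)
      rw [intervalIntegrable_iff_integrableOn_Ioc_of_le zero_le_one] at this
      exact this.const_mul β
    refine base.mono' m1.aestronglyMeasurable.restrict ?_
    filter_upwards [ae_restrict_mem measurableSet_Ioc] with t ht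
    obtain ⟨ht0, ht1⟩ := ht
    obtain ⟨hb0, hb1⟩ := one_sub_rpow_bounds hβ ht0.le
    have hp1 : (0:ℝ) < t ^ (-α) := Real.rpow_pos_of_pos ht0 _
    have hp2 : (0:ℝ) < t ^ (1-α) := Real.rpow_pos_of_pos ht0 _
    rw [Real.norm_eq_abs, abs_of_nonneg (by positivity)]
    have : β * t * t ^ (-α) = β * t ^ (1-α) := by
      rw [mul_assoc, ← Real.rpow_one_add' ht0.le (by linarith)]
      ring_nf
    nlinarith
  · have base : IntegrableOn (fun t : ℝ => t ^ (-α)) (Ioi 1) :=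
      integrableOn_Ioi_rpow_of_lt (by linarith) one_pos
    refine base.mono' m1.aestronglyMeasurable.restrict ?_
    filter_upwards [ae_restrict_mem measurableSet_Ioi] with t ht
    simp only [mem_Ioi] at ht
    have ht0 : (0:ℝ) < t := by linarith
    obtain ⟨hb0, hb1⟩ := one_sub_rpow_bounds hβ ht0.le
    have hb2 : 1 - (1+t) ^ (-β) ≤ 1 := by
      have : (0:ℝ) < (1+t) ^ (-β) := Real.rpow_pos_of_pos (by linarith) _
      linarith
    have hp1 : (0:ℝ) < t ^ (-α) := Real.rpow_pos_of_pos ht0 _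
    rw [Real.norm_eq_abs, abs_of_nonneg (by positivity)]
    nlinarith
lemma key_integral (α β : ℝ) (hα₁ : 1 < α) (hα₂ : α < 2) (hβ : 0 < β) :
    ∫ z in Ioi (0:ℝ), (1 - (1+z) ^ (-β)) * z ^ (-α)
      = β * (Real.Gamma (2-α) * Real.Gamma (α+β-1) / Real.Gamma (β+1)) / (α-1) := by
  set F : ℝ → ℝ := fun z => z ^ (1-α) * (1 - (1+z) ^ (-β)) with hF
  set φ : ℝ → ℝ := fun z =>
    (1-α) * ((1 - (1+z) ^ (-β)) * z ^ (-α)) + β * (z ^ (1-α) * (1+z) ^ (-β-1)) with hφ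
  have hh : IntegrableOn (fun z : ℝ => (1 - (1+z) ^ (-β)) * z ^ (-α)) (Ioi 0) :=
    integ_main α β hα₁ hα₂ hβ
  have hJ : IntegrableOn (fun z : ℝ => z ^ (1-α) * (1+z) ^ (-β-1)) (Ioi 0) :=
    integ_rpow_one_add (1-α) (-β-1) (by linarith) (by linarith) (by linarith)
  have hφint : IntegrableOn φ (Ioi 0) := (hh.const_mul _).add (hJ.const_mul _)
  -- derivative
  have hderiv : ∀ z ∈ Ioi (0:ℝ), HasDerivAt F (φ z) z := by
    intro z hz
    simp only [mem_Ioi] at hz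
    have h1 : (0:ℝ) < 1 + z := by linarith
    have d1 : HasDerivAt (fun z : ℝ => z ^ (1-α)) ((1-α) * z ^ (-α)) z := by
      have := Real.hasDerivAt_rpow_const (x := z) (p := 1-α) (Or.inl hz.ne')
      simpa [show (1-α)-1 = -α by ring] using this
    have d2 : HasDerivAt (fun z : ℝ => 1 - (1+z) ^ (-β)) (β * (1+z) ^ (-β-1)) z := by
      have inner : HasDerivAt (fun z : ℝ => 1 + z) 1 z := (hasDerivAt_id z).const_add 1
      have := (inner.rpow_const (p := -β) (Or.inl h1.ne')).const_sub 1
      simpa [show -β-1 = -β-1 by ring, mul_comm, mul_assoc] using this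
    have := d1.mul d2
    simp only [Pi.mul_def] at this
    refine this.congr_deriv ?_
    simp only [hφ]
    ring
  -- value at 0
  have hF0 : F 0 = 0 := by simp [hF]
  -- continuity at 0
  have hcont : ContinuousWithinAt F (Ici (0:ℝ)) 0 := by
    rw [ContinuousWithinAt, hF0]
    have htend : Tendsto (fun t : ℝ => β * t ^ (2-α)) (nhdsWithin 0 (Ici 0)) (nhds 0) := by
      have hc : ContinuousAt (fun t : ℝ => t ^ (2-α)) 0 :=
        Real.continuousAt_rpow_const 0 (2-α) (Or.inr (by linarith))
      have : Tendsto (fun t : ℝ => β * t ^ (2-α)) (nhds 0) (nhds (β * (0:ℝ) ^ (2-α))) :=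
        Tendsto.const_mul β hc
      rw [Real.zero_rpow (by linarith : (2:ℝ)-α ≠ 0), mul_zero] at this
      exact this.mono_left nhdsWithin_le_nhds
    refine squeeze_zero' ?_ ?_ htend
    · filter_upwards [self_mem_nhdsWithin] with t ht
      rcases eq_or_lt_of_le (mem_Ici.mp ht) with h | h
      · simp [hF, ← h]
      · have := (one_sub_rpow_bounds hβ (le_of_lt h)).1
        have : (0:ℝ) < t ^ (1-α) := Real.rpow_pos_of_pos h _
        simp only [hF]
        nlinarith [(one_sub_rpow_bounds hβ (le_of_lt h)).1]
    · filter_upwards [self_mem_nhdsWithin] with t ht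
      rcases eq_or_lt_of_le (mem_Ici.mp ht) with h | h
      · simp [hF, ← h, Real.zero_rpow (by linarith : (2:ℝ)-α ≠ 0),
          Real.zero_rpow (by linarith : (1:ℝ)-α ≠ 0)]
      · have hb := (one_sub_rpow_bounds hβ (le_of_lt h)).2
        have hp : (0:ℝ) < t ^ (1-α) := Real.rpow_pos_of_pos h _
        have he : t ^ (1-α) * t = t ^ (2-α) := by
          rw [mul_comm, ← Real.rpow_one_add' (le_of_lt h) (by linarith : 1 + (1-α) ≠ 0),
            show 1+(1-α) = 2-α by ring]
        simp only [hF]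
        nlinarith
  -- limit at infinity
  have htop : Tendsto F atTop (nhds 0) := by
    have htend : Tendsto (fun t : ℝ => t ^ (1-α)) atTop (nhds 0) := by
      have := tendsto_rpow_neg_atTop (y := α-1) (by linarith)
      simpa [show -(α-1) = 1-α by ring] using this
    refine squeeze_zero' ?_ ?_ htend
    · filter_upwards [eventually_gt_atTop 0] with t ht
      have := (one_sub_rpow_bounds hβ ht.le).1
      have : (0:ℝ) < t ^ (1-α) := Real.rpow_pos_of_pos ht _
      simp only [hF]
      nlinarith [(one_sub_rpow_bounds hβ ht.le).1]
    · filter_upwards [eventually_gt_atTop 0] with t ht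
      have h1 : (0:ℝ) < 1 + t := by linarith
      have h2 : (0:ℝ) < (1+t) ^ (-β) := Real.rpow_pos_of_pos h1 _
      have hp : (0:ℝ) < t ^ (1-α) := Real.rpow_pos_of_pos ht _
      simp only [hF]
      nlinarith
  have hFTC : ∫ z in Ioi (0:ℝ), φ z = 0 - F 0 :=
    integral_Ioi_of_hasDerivAt_of_tendsto hcont hderiv hφint htop
  rw [hF0, sub_zero] at hFTC
  have hsplit : ∫ z in Ioi (0:ℝ), φ z
      = (1-α) * (∫ z in Ioi (0:ℝ), (1 - (1+z) ^ (-β)) * z ^ (-α))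
        + β * (∫ z in Ioi (0:ℝ), z ^ (1-α) * (1+z) ^ (-β-1)) := by
    rw [hφ, integral_add (hh.const_mul _) (hJ.const_mul _),
      integral_const_mul, integral_const_mul]
  have hJval : ∫ z in Ioi (0:ℝ), z ^ (1-α) * (1+z) ^ (-β-1)
      = Real.Gamma (2-α) * Real.Gamma (α+β-1) / Real.Gamma (β+1) := by
    have h := betaIoi (2-α) (α+β-1) (by linarith) (by linarith)
    rw [show (2-α) + (α+β-1) = β+1 by ring] at h
    rw [← h]
    refine setIntegral_congr_fun measurableSet_Ioi fun t ht => ?_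
    rw [show (2-α)-1 = 1-α by ring, show -(2-α)-(α+β-1) = -β-1 by ring]
  rw [hsplit, hJval] at hFTC
  have hα : α - 1 ≠ 0 := by linarith
  rw [eq_div_iff hα]
  linarith [hFTC]

/-- Lemma 3.2, first identity: for `α ∈ (1,2)` and `β > 0`,
`∫_0^∞ [1 − (1+z)^{−β}] z μ_α(dz) = αβΓ(α+β−1)/(Γ(α)Γ(β+1))`, where
`μ_α(dz) = (α(α−1)/(Γ(α)Γ(2−α))) z^{−1−α} dz` on `(0,∞)`. -/
theorem stable_measure_integral_one (α β : ℝ) (hα₁ : 1 < α) (hα₂ : α < 2) (hβ : 0 < β) :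
    ∫ z in Ioi (0 : ℝ),
        (1 - (1 + z) ^ (-β)) * z *
          (α * (α - 1) / (Real.Gamma α * Real.Gamma (2 - α)) * z ^ (-1 - α))
      = α * β * Real.Gamma (α + β - 1) / (Real.Gamma α * Real.Gamma (β + 1)) := by
  set C : ℝ := α * (α - 1) / (Real.Gamma α * Real.Gamma (2 - α)) with hC
  have hrw : ∫ z in Ioi (0 : ℝ),
      (1 - (1 + z) ^ (-β)) * z * (C * z ^ (-1 - α))
      = ∫ z in Ioi (0 : ℝ), C * ((1 - (1 + z) ^ (-β)) * z ^ (-α)) := by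
    refine setIntegral_congr_fun measurableSet_Ioi fun z hz => ?_
    simp only [mem_Ioi] at hz
    have e : z ^ (-1 - α) = z⁻¹ * z ^ (-α) := by
      rw [show -1 - α = -1 + -α by ring, Real.rpow_add hz, Real.rpow_neg_one]
    rw [e]
    field_simp
  rw [hrw, integral_const_mul, key_integral α β hα₁ hα₂ hβ, hC]
  have hG1 : (0:ℝ) < Real.Gamma α := Real.Gamma_pos_of_pos (by linarith)
  have hG2 : (0:ℝ) < Real.Gamma (2 - α) := Real.Gamma_pos_of_pos (by linarith)
  have hG3 : (0:ℝ) < Real.Gamma (β + 1) := Real.Gamma_pos_of_pos (by linarith)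
  have hα : α - 1 ≠ 0 := by linarith
  field_simp
end

section
/- Let α ∈ (1,2) and β > 0. Then ∫_0^∞ [(1+z)^{−β} − 1 + βz] μ_α(dz) = β(β+1)Γ(α+β)/(Γ(α)Γ(β+2)). -/
open MeasureTheory Set Real


/-- Bernoulli-type inequality for negative exponents. -/
lemma sm2_bern {p z : ℝ} (hp : 0 ≤ p) (hz : 0 ≤ z) : 1 - p * z ≤ (1 + z) ^ (-p) := by
  have h1 : (0:ℝ) < 1 + z := by linarith
  rw [Real.rpow_def_of_pos h1]
  have hlog : Real.log (1 + z) ≤ z := by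
    have := Real.log_le_sub_one_of_pos h1
    linarith
  have h3 := Real.add_one_le_exp (Real.log (1 + z) * -p)
  nlinarith

lemma sm2_hasDerivAt_one_add_rpow (q : ℝ) {z : ℝ} (hz : -1 < z) :
    HasDerivAt (fun w : ℝ => (1 + w) ^ q) (q * (1 + z) ^ (q - 1)) z := by
  have h0 : (1:ℝ) + z ≠ 0 := by linarith
  have h := (Real.hasDerivAt_rpow_const (x := 1 + z) (p := q) (Or.inl h0)).comp z
    ((hasDerivAt_id z).const_add 1)
  exact h.congr_deriv (mul_one _)

lemma sm2_hasDerivAt_f (β : ℝ) {z : ℝ} (hz : -1 < z) :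
    HasDerivAt (fun w : ℝ => (1 + w) ^ (-β) - 1 + β * w)
      (β - β * (1 + z) ^ (-β - 1)) z := by
  have h := ((sm2_hasDerivAt_one_add_rpow (-β) hz).sub_const 1).add
    ((hasDerivAt_id z).const_mul β)
  exact h.congr_deriv (by ring)

lemma sm2_fderiv_lb {β z : ℝ} (hβ : 0 ≤ β) (hz : 0 ≤ z) :
    0 ≤ β - β * (1 + z) ^ (-β - 1) := by
  have h1 : (1 + z) ^ (-β - 1) ≤ 1 :=
    Real.rpow_le_one_of_one_le_of_nonpos (by linarith) (by linarith)
  nlinarith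

lemma sm2_fderiv_ub {β z : ℝ} (hβ : 0 ≤ β) (hz : 0 ≤ z) :
    β - β * (1 + z) ^ (-β - 1) ≤ β * (β + 1) * z := by
  have h1 : 1 - (β + 1) * z ≤ (1 + z) ^ (-(β + 1)) := sm2_bern (by linarith) hz
  have h2 : (-(β+1) : ℝ) = -β - 1 := by ring
  rw [h2] at h1
  nlinarith

lemma sm2_f_nonneg {β z : ℝ} (hβ : 0 ≤ β) (hz : 0 ≤ z) :
    0 ≤ (1 + z) ^ (-β) - 1 + β * z := by
  have h1 := sm2_bern hβ hz
  linarith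

lemma sm2_f_le {β z : ℝ} (hβ : 0 ≤ β) (hz : 0 ≤ z) :
    (1 + z) ^ (-β) - 1 + β * z ≤ β * (β + 1) / 2 * z ^ 2 := by
  set φ : ℝ → ℝ := fun w => β * (β + 1) / 2 * w ^ 2 - ((1 + w) ^ (-β) - 1 + β * w) with hφ
  have hd : ∀ x : ℝ, 0 < x → HasDerivAt φ
      (β * (β + 1) * x - (β - β * (1 + x) ^ (-β - 1))) x := by
    intro x hx
    have h1 := ((hasDerivAt_pow 2 x).const_mul (β * (β + 1) / 2)).sub
      (sm2_hasDerivAt_f β (by linarith))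
    exact h1.congr_deriv (by ring)
  have hmono : MonotoneOn φ (Ici (0:ℝ)) := by
    apply monotoneOn_of_deriv_nonneg (convex_Ici 0)
    · apply ContinuousOn.sub (by fun_prop)
      apply ContinuousOn.add (ContinuousOn.sub ?_ continuousOn_const) (by fun_prop)
      apply ContinuousOn.rpow_const (by fun_prop)
      intro x hx
      left
      simp only [mem_Ici] at hx
      positivity
    · intro x hx
      rw [interior_Ici] at hx
      exact (hd x hx).differentiableAt.differentiableWithinAt
    · intro x hx
      rw [interior_Ici] at hx
      rw [(hd x hx).deriv]
      have := sm2_fderiv_ub hβ (le_of_lt hx)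
      linarith
  rcases eq_or_lt_of_le hz with h | h
  · simp [φ, ← h]
  · have := hmono (self_mem_Ici) (le_of_lt h : (0:ℝ) ≤ z) hz
    simp only [φ] at this ⊢
    simp at this
    linarith

lemma sm2_integrable_aux {F : ℝ → ℝ} (hF : ContinuousOn F (Ioi 0)) {C₁ C₂ p q : ℝ}
    (hp : -1 < p) (hq : q < -1)
    (hb1 : ∀ z : ℝ, 0 < z → z ≤ 1 → ‖F z‖ ≤ C₁ * z ^ p)
    (hb2 : ∀ z : ℝ, 1 ≤ z → ‖F z‖ ≤ C₂ * z ^ q) :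
    IntegrableOn F (Ioi (0:ℝ)) := by
  rw [← Ioc_union_Ioi_eq_Ioi (zero_le_one : (0:ℝ) ≤ 1)]
  apply IntegrableOn.union
  · apply Integrable.mono' (((intervalIntegral.intervalIntegrable_rpow'
      (a := 0) (b := 1) hp).1).const_mul C₁)
    · exact (hF.mono Ioc_subset_Ioi_self).aestronglyMeasurable measurableSet_Ioc
    · rw [ae_restrict_iff' measurableSet_Ioc]
      exact ae_of_all _ fun z hz => hb1 z hz.1 hz.2
  · apply Integrable.mono' ((integrableOn_Ioi_rpow_of_lt hq one_pos).const_mul C₂)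
    · exact (hF.mono (Ioi_subset_Ioi zero_le_one)).aestronglyMeasurable measurableSet_Ioi
    · rw [ae_restrict_iff' measurableSet_Ioi]
      exact ae_of_all _ fun z hz => hb2 z (le_of_lt hz)

lemma sm2_cont1 (q : ℝ) : ContinuousOn (fun z : ℝ => (1 + z) ^ q) (Ioi 0) :=
  ContinuousOn.rpow_const ((continuous_const.add continuous_id).continuousOn)
    (fun z hz => Or.inl (by have := mem_Ioi.mp hz; positivity))

lemma sm2_cont2 (q : ℝ) : ContinuousOn (fun z : ℝ => z ^ q) (Ioi 0) :=
  ContinuousOn.rpow_const continuousOn_id (fun z hz => Or.inl (ne_of_gt (mem_Ioi.mp hz)))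

lemma sm2_h_int {α β : ℝ} (hα₁ : 1 < α) (hα₂ : α < 2) (hβ : 0 < β) :
    IntegrableOn (fun z : ℝ => (1 + z) ^ (-β - 2) * z ^ (1 - α)) (Ioi (0:ℝ)) := by
  apply sm2_integrable_aux ((sm2_cont1 (-β - 2)).mul (sm2_cont2 (1 - α)))
    (C₁ := 1) (C₂ := 1) (p := 1 - α) (q := (-β - 2) + (1 - α))
    (by linarith) (by linarith)
  · intro z h0 h1
    rw [Real.norm_eq_abs, abs_of_nonneg (by
      exact mul_nonneg (Real.rpow_nonneg (by linarith) _) (Real.rpow_nonneg h0.le _))]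
    exact mul_le_mul_of_nonneg_right
      (Real.rpow_le_one_of_one_le_of_nonpos (by linarith) (by linarith))
      (Real.rpow_nonneg h0.le _)
  · intro z h1
    have h0 : (0:ℝ) < z := lt_of_lt_of_le one_pos h1
    rw [Real.norm_eq_abs, abs_of_nonneg (by
      exact mul_nonneg (Real.rpow_nonneg (by linarith) _) (Real.rpow_nonneg h0.le _))]
    rw [one_mul]
    calc (1 + z) ^ (-β - 2) * z ^ (1 - α)
        ≤ z ^ (-β - 2) * z ^ (1 - α) :=
          mul_le_mul_of_nonneg_right
            (Real.rpow_le_rpow_of_nonpos h0 (by linarith) (by linarith))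
            (Real.rpow_nonneg h0.le _)
      _ = z ^ ((-β - 2) + (1 - α)) := (Real.rpow_add h0 _ _).symm

lemma sm2_g_int {α β : ℝ} (hα₁ : 1 < α) (hα₂ : α < 2) (hβ : 0 < β) :
    IntegrableOn (fun z : ℝ => ((1 + z) ^ (-β) - 1 + β * z) * z ^ (-1 - α)) (Ioi (0:ℝ)) := by
  have hcont : ContinuousOn (fun z : ℝ => ((1 + z) ^ (-β) - 1 + β * z) * z ^ (-1 - α)) (Ioi 0) :=
    (((sm2_cont1 (-β)).sub continuousOn_const).add
      ((continuous_const.mul continuous_id).continuousOn)).mul (sm2_cont2 (-1 - α))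
  apply sm2_integrable_aux hcont (C₁ := β * (β + 1) / 2) (C₂ := β) (p := 1 - α) (q := -α)
    (by linarith) (by linarith)
  · intro z h0 h1
    have hnn : 0 ≤ ((1 + z) ^ (-β) - 1 + β * z) * z ^ (-1 - α) :=
      mul_nonneg (sm2_f_nonneg hβ.le h0.le) (Real.rpow_nonneg h0.le _)
    rw [Real.norm_eq_abs, abs_of_nonneg hnn]
    have hz2 : z ^ (2:ℕ) * z ^ (-1 - α) = z ^ (1 - α) := by
      rw [← Real.rpow_natCast z 2, ← Real.rpow_add h0]
      congr 1
      push_cast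
      ring
    calc ((1 + z) ^ (-β) - 1 + β * z) * z ^ (-1 - α)
        ≤ (β * (β + 1) / 2 * z ^ (2:ℕ)) * z ^ (-1 - α) :=
          mul_le_mul_of_nonneg_right (sm2_f_le hβ.le h0.le) (Real.rpow_nonneg h0.le _)
      _ = β * (β + 1) / 2 * z ^ (1 - α) := by rw [mul_assoc, hz2]
  · intro z h1
    have h0 : (0:ℝ) < z := lt_of_lt_of_le one_pos h1
    have hnn : 0 ≤ ((1 + z) ^ (-β) - 1 + β * z) * z ^ (-1 - α) :=
      mul_nonneg (sm2_f_nonneg hβ.le h0.le) (Real.rpow_nonneg h0.le _)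
    rw [Real.norm_eq_abs, abs_of_nonneg hnn]
    have hfub : (1 + z) ^ (-β) - 1 + β * z ≤ β * z := by
      have := Real.rpow_le_one_of_one_le_of_nonpos (x := 1 + z) (z := -β)
        (by linarith) (by linarith)
      linarith
    have hz1 : z * z ^ (-1 - α) = z ^ (-α) := by
      nth_rewrite 1 [← Real.rpow_one z]
      rw [← Real.rpow_add h0]
      congr 1
      ring
    calc ((1 + z) ^ (-β) - 1 + β * z) * z ^ (-1 - α)
        ≤ (β * z) * z ^ (-1 - α) :=
          mul_le_mul_of_nonneg_right hfub (Real.rpow_nonneg h0.le _)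
      _ = β * z ^ (-α) := by rw [mul_assoc, hz1]

lemma sm2_beta {a b : ℝ} (ha : 0 < a) (hb : 0 < b) :
    ∫ x in Ioo (0:ℝ) 1, x ^ (a - 1) * (1 - x) ^ (b - 1)
      = Real.Gamma a * Real.Gamma b / Real.Gamma (a + b) := by
  have key := Complex.Gamma_mul_Gamma_eq_betaIntegral (s := (a:ℂ)) (t := (b:ℂ))
    (by simpa using ha) (by simpa using hb)
  have hbeta : Complex.betaIntegral a b
      = ((∫ x in (0:ℝ)..1, x ^ (a - 1) * (1 - x) ^ (b - 1) : ℝ) : ℂ) := by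
    rw [Complex.betaIntegral, ← intervalIntegral.integral_ofReal]
    apply intervalIntegral.integral_congr
    intro x hx
    rw [uIcc_of_le zero_le_one] at hx
    simp only []
    rw [Complex.ofReal_mul, Complex.ofReal_cpow hx.1,
      Complex.ofReal_cpow (by linarith [hx.2] : (0:ℝ) ≤ 1 - x)]
    push_cast
    ring
  rw [hbeta, ← Complex.ofReal_add, Complex.Gamma_ofReal, Complex.Gamma_ofReal,
    Complex.Gamma_ofReal] at key
  have key2 : Real.Gamma a * Real.Gamma b
      = Real.Gamma (a + b) * ∫ x in (0:ℝ)..1, x ^ (a - 1) * (1 - x) ^ (b - 1) := by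
    exact_mod_cast key
  have hG : Real.Gamma (a + b) ≠ 0 := (Real.Gamma_pos_of_pos (by linarith)).ne'
  rw [← MeasureTheory.integral_Ioc_eq_integral_Ioo,
    ← intervalIntegral.integral_of_le zero_le_one]
  field_simp [hG] at key2 ⊢
  linarith [key2]
lemma sm2_H_deriv {α β : ℝ} (hα₁ : 1 < α) (hα₂ : α < 2) (hβ : 0 < β) {z : ℝ} (hz : 0 < z) :
    HasDerivAt (fun w : ℝ =>
        -(1/α) * (((1 + w) ^ (-β) - 1 + β * w) * w ^ (-α))
          - (1/(α*(α-1))) * ((β - β * (1 + w) ^ (-β - 1)) * w ^ (1-α)))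
      (((1 + z) ^ (-β) - 1 + β * z) * z ^ (-1 - α)
        - (β * (β + 1) / (α * (α - 1))) * ((1 + z) ^ (-β - 2) * z ^ (1 - α))) z := by
  have hz1 : (-1:ℝ) < z := by linarith
  have hf := sm2_hasDerivAt_f β hz1
  have hp1 : HasDerivAt (fun w : ℝ => w ^ (-α)) (-α * z ^ (-α - 1)) z :=
    Real.hasDerivAt_rpow_const (Or.inl hz.ne')
  have hp2 : HasDerivAt (fun w : ℝ => w ^ (1 - α)) ((1 - α) * z ^ (1 - α - 1)) z :=
    Real.hasDerivAt_rpow_const (Or.inl hz.ne')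
  have hf' : HasDerivAt (fun w : ℝ => β - β * (1 + w) ^ (-β - 1))
      (β * (β + 1) * (1 + z) ^ (-β - 1 - 1)) z := by
    have h := ((sm2_hasDerivAt_one_add_rpow (-β - 1) hz1).const_mul β).const_sub β
    exact h.congr_deriv (by ring)
  have hH := ((hf.mul hp1).const_mul (-(1/α))).sub ((hf'.mul hp2).const_mul (1/(α*(α-1))))
  refine hH.congr_deriv ?_
  rw [show (-α - 1 : ℝ) = -1 - α by ring, show (1 - α - 1 : ℝ) = -α by ring,
    show (-β - 1 - 1 : ℝ) = -β - 2 by ring]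
  have e1 : z ^ (1 - α) = z * z ^ (-α) := by
    nth_rewrite 2 [← Real.rpow_one z]
    rw [← Real.rpow_add hz]
    try congr 1
    try ring
  have e2 : z ^ (-α) = z * z ^ (-1 - α) := by
    nth_rewrite 2 [← Real.rpow_one z]
    rw [← Real.rpow_add hz]
    try congr 1
    try ring
  rw [e1, e2]
  have hα0 : α ≠ 0 := by linarith
  have hα1 : α - 1 ≠ 0 := by intro h; linarith [h]
  field_simp
  ring

lemma sm2_H_lim0 {α β : ℝ} (hα₁ : 1 < α) (hα₂ : α < 2) (hβ : 0 < β) :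
    Filter.Tendsto (fun w : ℝ =>
        -(1/α) * (((1 + w) ^ (-β) - 1 + β * w) * w ^ (-α))
          - (1/(α*(α-1))) * ((β - β * (1 + w) ^ (-β - 1)) * w ^ (1-α)))
      (nhdsWithin 0 (Ioi 0)) (nhds 0) := by
  set C : ℝ := (1/α) * (β * (β + 1) / 2) + (1/(α*(α-1))) * (β * (β + 1)) with hC
  have hbound : ∀ z : ℝ, 0 < z → ‖-(1/α) * (((1 + z) ^ (-β) - 1 + β * z) * z ^ (-α))
      - (1/(α*(α-1))) * ((β - β * (1 + z) ^ (-β - 1)) * z ^ (1-α))‖ ≤ C * z ^ (2 - α) := by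
    intro z hz
    have h2a : z ^ (2:ℕ) * z ^ (-α) = z ^ (2 - α) := by
      rw [← Real.rpow_natCast z 2, ← Real.rpow_add hz]
      try congr 1
      try push_cast
      try ring
    have h2b : z * z ^ (1 - α) = z ^ (2 - α) := by
      nth_rewrite 1 [← Real.rpow_one z]
      rw [← Real.rpow_add hz]
      try congr 1
      try ring
    have hA1 : 0 ≤ ((1 + z) ^ (-β) - 1 + β * z) * z ^ (-α) :=
      mul_nonneg (sm2_f_nonneg hβ.le hz.le) (Real.rpow_nonneg hz.le _)
    have hA2 : ((1 + z) ^ (-β) - 1 + β * z) * z ^ (-α) ≤ β * (β + 1) / 2 * z ^ (2 - α) := by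
      calc ((1 + z) ^ (-β) - 1 + β * z) * z ^ (-α)
          ≤ (β * (β + 1) / 2 * z ^ (2:ℕ)) * z ^ (-α) :=
            mul_le_mul_of_nonneg_right (sm2_f_le hβ.le hz.le) (Real.rpow_nonneg hz.le _)
        _ = β * (β + 1) / 2 * z ^ (2 - α) := by rw [mul_assoc, h2a]
    have hB1 : 0 ≤ (β - β * (1 + z) ^ (-β - 1)) * z ^ (1-α) :=
      mul_nonneg (sm2_fderiv_lb hβ.le hz.le) (Real.rpow_nonneg hz.le _)
    have hB2 : (β - β * (1 + z) ^ (-β - 1)) * z ^ (1-α) ≤ β * (β + 1) * z ^ (2 - α) := by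
      calc (β - β * (1 + z) ^ (-β - 1)) * z ^ (1-α)
          ≤ (β * (β + 1) * z) * z ^ (1-α) :=
            mul_le_mul_of_nonneg_right (sm2_fderiv_ub hβ.le hz.le) (Real.rpow_nonneg hz.le _)
        _ = β * (β + 1) * z ^ (2 - α) := by rw [mul_assoc, h2b]
    have h1α : 0 < 1/α := by positivity
    have h1α1 : 0 < 1/(α*(α-1)) := by
      have : 0 < α * (α - 1) := by nlinarith
      positivity
    rw [Real.norm_eq_abs, abs_le]
    simp only [hC]
    constructor <;> nlinarith [mul_le_mul_of_nonneg_left hA2 h1α.le,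
      mul_le_mul_of_nonneg_left hB2 h1α1.le, mul_nonneg h1α.le hA1, mul_nonneg h1α1.le hB1]
  apply squeeze_zero_norm' (Filter.eventually_iff_exists_mem.mpr
    ⟨Ioi 0, self_mem_nhdsWithin, fun z hz => hbound z (mem_Ioi.mp hz)⟩)
  have hc : Filter.Tendsto (fun z : ℝ => z ^ (2 - α)) (nhdsWithin 0 (Ioi 0)) (nhds 0) := by
    have h := (Real.continuousAt_rpow_const 0 (2 - α) (Or.inr (by linarith))).tendsto
    rw [Real.zero_rpow (by intro h'; linarith [h'] : (2 - α) ≠ 0)] at h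
    exact h.mono_left nhdsWithin_le_nhds
  have := hc.const_mul C
  simpa using this

lemma sm2_H_limtop {α β : ℝ} (hα₁ : 1 < α) (hα₂ : α < 2) (hβ : 0 < β) :
    Filter.Tendsto (fun w : ℝ =>
        -(1/α) * (((1 + w) ^ (-β) - 1 + β * w) * w ^ (-α))
          - (1/(α*(α-1))) * ((β - β * (1 + w) ^ (-β - 1)) * w ^ (1-α)))
      Filter.atTop (nhds 0) := by
  set C : ℝ := (1/α) * β + (1/(α*(α-1))) * β with hC
  have hbound : ∀ z : ℝ, 1 ≤ z → ‖-(1/α) * (((1 + z) ^ (-β) - 1 + β * z) * z ^ (-α))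
      - (1/(α*(α-1))) * ((β - β * (1 + z) ^ (-β - 1)) * z ^ (1-α))‖ ≤ C * z ^ (1 - α) := by
    intro z hz1
    have hz : (0:ℝ) < z := lt_of_lt_of_le one_pos hz1
    have h2b : z * z ^ (-α) = z ^ (1 - α) := by
      nth_rewrite 1 [← Real.rpow_one z]
      rw [← Real.rpow_add hz]
      try congr 1
      try ring
    have hA1 : 0 ≤ ((1 + z) ^ (-β) - 1 + β * z) * z ^ (-α) :=
      mul_nonneg (sm2_f_nonneg hβ.le hz.le) (Real.rpow_nonneg hz.le _)
    have hfub : (1 + z) ^ (-β) - 1 + β * z ≤ β * z := by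
      have := Real.rpow_le_one_of_one_le_of_nonpos (x := 1 + z) (z := -β)
        (by linarith) (by linarith)
      linarith
    have hA2 : ((1 + z) ^ (-β) - 1 + β * z) * z ^ (-α) ≤ β * z ^ (1 - α) := by
      calc ((1 + z) ^ (-β) - 1 + β * z) * z ^ (-α)
          ≤ (β * z) * z ^ (-α) :=
            mul_le_mul_of_nonneg_right hfub (Real.rpow_nonneg hz.le _)
        _ = β * z ^ (1 - α) := by rw [mul_assoc, h2b]
    have hB1 : 0 ≤ (β - β * (1 + z) ^ (-β - 1)) * z ^ (1-α) :=
      mul_nonneg (sm2_fderiv_lb hβ.le hz.le) (Real.rpow_nonneg hz.le _)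
    have hB2 : (β - β * (1 + z) ^ (-β - 1)) * z ^ (1-α) ≤ β * z ^ (1 - α) := by
      have h1 : β - β * (1 + z) ^ (-β - 1) ≤ β := by
        have : 0 ≤ β * (1 + z) ^ (-β - 1) :=
          mul_nonneg hβ.le (Real.rpow_nonneg (by linarith) _)
        linarith
      exact mul_le_mul_of_nonneg_right h1 (Real.rpow_nonneg hz.le _)
    have h1α : 0 < 1/α := by positivity
    have h1α1 : 0 < 1/(α*(α-1)) := by
      have : 0 < α * (α - 1) := by nlinarith
      positivity
    rw [Real.norm_eq_abs, abs_le]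
    simp only [hC]
    constructor <;> nlinarith [mul_le_mul_of_nonneg_left hA2 h1α.le,
      mul_le_mul_of_nonneg_left hB2 h1α1.le, mul_nonneg h1α.le hA1, mul_nonneg h1α1.le hB1]
  apply squeeze_zero_norm' (Filter.eventually_atTop.mpr ⟨1, hbound⟩)
  have hc : Filter.Tendsto (fun z : ℝ => z ^ (1 - α)) Filter.atTop (nhds 0) := by
    have := tendsto_rpow_neg_atTop (by linarith : (0:ℝ) < α - 1)
    simpa [show ∀ z : ℝ, z ^ (-(α - 1)) = z ^ (1 - α) from fun z => by norm_num] using this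
  have := hc.const_mul C
  simpa using this

lemma sm2_B {α β : ℝ} (hα₁ : 1 < α) (hα₂ : α < 2) (hβ : 0 < β) :
    ∫ z in Ioi (0:ℝ), (1 + z) ^ (-β - 2) * z ^ (1 - α)
      = Real.Gamma (2 - α) * Real.Gamma (α + β) / Real.Gamma (β + 2) := by
  set φ : ℝ → ℝ := fun t => t / (1 - t) with hφdef
  have himg : φ '' Ioo 0 1 = Ioi (0:ℝ) := by
    ext y
    constructor
    · rintro ⟨t, ⟨ht0, ht1⟩, rfl⟩
      have : 0 < 1 - t := by linarith
      exact mem_Ioi.mpr (by positivity)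
    · intro hy
      rw [mem_Ioi] at hy
      refine ⟨y / (1 + y), ⟨by positivity, ?_⟩, ?_⟩
      · rw [div_lt_one (by positivity)]; linarith
      · simp only [hφdef]
        have h1 : (1:ℝ) + y ≠ 0 := by positivity
        field_simp
        ring
  have hderiv : ∀ t ∈ Ioo (0:ℝ) 1, HasDerivWithinAt φ ((1 - t) ^ (2:ℕ))⁻¹ (Ioo 0 1) t := by
    intro t ⟨ht0, ht1⟩
    have hne : 1 - t ≠ 0 := by intro h; linarith [h]
    have := (hasDerivAt_id t).div ((hasDerivAt_id t).const_sub 1) hne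
    refine HasDerivAt.hasDerivWithinAt ?_
    refine this.congr_deriv ?_
    simp only [id_eq]
    ring
  have hinj : InjOn φ (Ioo 0 1) := by
    rintro t1 ⟨h1a, h1b⟩ t2 ⟨h2a, h2b⟩ h
    simp only [hφdef] at h
    rw [div_eq_div_iff (by linarith) (by linarith)] at h
    nlinarith
  have key := integral_image_eq_integral_abs_deriv_smul measurableSet_Ioo hderiv hinj
    (fun z => (1 + z) ^ (-β - 2) * z ^ (1 - α))
  rw [himg] at key
  rw [key]
  have heq : ∀ t ∈ Ioo (0:ℝ) 1,
      |((1 - t) ^ (2:ℕ))⁻¹| • ((1 + φ t) ^ (-β - 2) * φ t ^ (1 - α))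
        = t ^ ((2 - α) - 1) * (1 - t) ^ ((α + β) - 1) := by
    intro t ⟨ht0, ht1⟩
    have h1t : (0:ℝ) < 1 - t := by linarith
    have h1 : 1 + φ t = (1 - t)⁻¹ := by
      simp only [hφdef]
      field_simp
      ring
    have h2 : φ t ^ (1 - α) = t ^ (1 - α) * (1 - t) ^ (α - 1) := by
      simp only [hφdef]
      rw [Real.div_rpow ht0.le h1t.le, div_eq_mul_inv, ← Real.rpow_neg h1t.le,
        show -(1 - α) = α - 1 by ring]
    have h3 : (1 + φ t) ^ (-β - 2) = (1 - t) ^ (β + 2) := by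
      rw [h1, ← Real.rpow_neg_one, ← Real.rpow_mul h1t.le]
      congr 1
      ring
    have h4 : ((1 - t) ^ (2:ℕ))⁻¹ = (1 - t) ^ (-2 : ℝ) := by
      rw [← Real.rpow_natCast (1 - t) 2, ← Real.rpow_neg h1t.le]
      norm_num
    have h5 : (1 - t) ^ (-2:ℝ) * ((1 - t) ^ (β + 2) * (1 - t) ^ (α - 1))
        = (1 - t) ^ ((α + β) - 1) := by
      rw [← Real.rpow_add h1t, ← Real.rpow_add h1t]
      congr 1
      ring
    rw [h3, h2, smul_eq_mul, abs_of_pos (by positivity : (0:ℝ) < ((1 - t) ^ (2:ℕ))⁻¹), h4,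
      show ((2:ℝ) - α - 1) = 1 - α by ring, ← h5]
    ring
  rw [setIntegral_congr_fun measurableSet_Ioo heq]
  have := sm2_beta (a := 2 - α) (b := α + β) (by linarith) (by linarith)
  rw [show (2 - α) + (α + β) = β + 2 by ring] at this
  exact this

/-- Lemma 3.2, second identity: for `α ∈ (1,2)` and `β > 0`,
`∫_0^∞ [(1+z)^{−β} − 1 + βz] μ_α(dz) = β(β+1)Γ(α+β)/(Γ(α)Γ(β+2))`, where
`μ_α(dz) = (α(α−1)/(Γ(α)Γ(2−α))) z^{−1−α} dz` on `(0,∞)`. -/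
theorem stable_measure_integral_two (α β : ℝ) (hα₁ : 1 < α) (hα₂ : α < 2) (hβ : 0 < β) :
    ∫ z in Ioi (0 : ℝ),
        ((1 + z) ^ (-β) - 1 + β * z) *
          (α * (α - 1) / (Real.Gamma α * Real.Gamma (2 - α)) * z ^ (-1 - α))
      = β * (β + 1) * Real.Gamma (α + β) / (Real.Gamma α * Real.Gamma (β + 2)) := by
  have hα0 : (0:ℝ) < α := by linarith
  have hΓα : 0 < Real.Gamma α := Real.Gamma_pos_of_pos hα0
  have hΓ2α : 0 < Real.Gamma (2 - α) := Real.Gamma_pos_of_pos (by linarith)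
  have hΓβ2 : 0 < Real.Gamma (β + 2) := Real.Gamma_pos_of_pos (by linarith)
  set c : ℝ := α * (α - 1) / (Real.Gamma α * Real.Gamma (2 - α)) with hc
  set c₂ : ℝ := β * (β + 1) / (α * (α - 1)) with hc₂
  set H : ℝ → ℝ := fun w =>
      -(1/α) * (((1 + w) ^ (-β) - 1 + β * w) * w ^ (-α))
        - (1/(α*(α-1))) * ((β - β * (1 + w) ^ (-β - 1)) * w ^ (1-α)) with hHdef
  set G : ℝ → ℝ := fun z =>
      ((1 + z) ^ (-β) - 1 + β * z) * z ^ (-1 - α)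
        - c₂ * ((1 + z) ^ (-β - 2) * z ^ (1 - α)) with hGdef
  have hH0 : H 0 = 0 := by
    simp only [hHdef]
    rw [Real.zero_rpow (by linarith : (-α:ℝ) ≠ 0).symm.symm,
      Real.zero_rpow (show (1 - α : ℝ) ≠ 0 by intro h; linarith [h])]
    norm_num
  have hcont : ContinuousWithinAt H (Ici 0) 0 := by
    rw [← continuousWithinAt_Ioi_iff_Ici]
    unfold ContinuousWithinAt
    rw [hH0]
    exact sm2_H_lim0 hα₁ hα₂ hβ
  have hderiv : ∀ x ∈ Ioi (0:ℝ), HasDerivAt H (G x) x := fun x hx =>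
    sm2_H_deriv hα₁ hα₂ hβ (mem_Ioi.mp hx)
  have hint : IntegrableOn G (Ioi (0:ℝ)) :=
    (sm2_g_int hα₁ hα₂ hβ).sub ((sm2_h_int hα₁ hα₂ hβ).const_mul c₂)
  have hFTC := MeasureTheory.integral_Ioi_of_hasDerivAt_of_tendsto
    hcont hderiv hint (sm2_H_limtop hα₁ hα₂ hβ)
  rw [hH0, sub_zero] at hFTC
  have hsub : ∫ z in Ioi (0:ℝ), G z
      = (∫ z in Ioi (0:ℝ), ((1 + z) ^ (-β) - 1 + β * z) * z ^ (-1 - α))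
        - c₂ * ∫ z in Ioi (0:ℝ), (1 + z) ^ (-β - 2) * z ^ (1 - α) := by
    rw [hGdef]
    rw [MeasureTheory.integral_sub (sm2_g_int hα₁ hα₂ hβ)
      ((sm2_h_int hα₁ hα₂ hβ).const_mul c₂), MeasureTheory.integral_const_mul c₂]
  have hkey : (∫ z in Ioi (0:ℝ), ((1 + z) ^ (-β) - 1 + β * z) * z ^ (-1 - α))
      = c₂ * (Real.Gamma (2 - α) * Real.Gamma (α + β) / Real.Gamma (β + 2)) := by
    rw [← sm2_B hα₁ hα₂ hβ]
    rw [hFTC] at hsub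
    linarith [hsub]
  have hpull : ∫ z in Ioi (0 : ℝ),
      ((1 + z) ^ (-β) - 1 + β * z) * (c * z ^ (-1 - α))
      = c * ∫ z in Ioi (0:ℝ), ((1 + z) ^ (-β) - 1 + β * z) * z ^ (-1 - α) := by
    rw [← MeasureTheory.integral_const_mul c]
    congr 1
    funext z
    ring
  rw [hpull, hkey, hc, hc₂]
  have hα1 : (α - 1) ≠ 0 := by intro h; linarith [h]
  field_simp
end

section
/- Let α ∈ (1,2) and 0 < β < α − 1. Then ∫_0^∞ [(1+z)^β − 1] z μ_α(dz) = αβΓ(α−β−1)/(Γ(α)Γ(1−β)). -/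
open MeasureTheory Set Real Filter Topology

set_option maxHeartbeats 1000000


lemma beta_integrand_integrable (a b : ℝ) (ha : 0 < a) (hb : 0 < b) :
    IntegrableOn (fun x : ℝ => x ^ (a-1) * (1-x) ^ (b-1)) (Ioo 0 1) := by
  have h := (Complex.betaIntegral_convergent (u := (a:ℂ)) (v := (b:ℂ)) (by simpa) (by simpa)).1
  have h2 : IntegrableOn (fun x : ℝ => (((x:ℂ) ^ ((a:ℂ)-1) * (1-(x:ℂ)) ^ ((b:ℂ)-1)).re))
      (Ioc 0 1) := h.re
  refine ((h2.congr_fun (fun x hx => ?_) measurableSet_Ioc).mono_set Ioo_subset_Ioc_self)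
  rw [show ((a:ℂ)-1) = ((a-1 : ℝ):ℂ) by push_cast; ring,
    show ((b:ℂ)-1) = ((b-1 : ℝ):ℂ) by push_cast; ring,
    show (1 - (x:ℂ)) = ((1-x : ℝ):ℂ) by push_cast; ring,
    ← Complex.ofReal_cpow hx.1.le, ← Complex.ofReal_cpow (by linarith [hx.2] : (0:ℝ) ≤ 1 - x),
    ← Complex.ofReal_mul, Complex.ofReal_re]

lemma subst_deriv {x : ℝ} (hx : x ∈ Ioo (0:ℝ) 1) :
    HasDerivAt (fun x : ℝ => x / (1-x)) ((1-x)^2)⁻¹ x := by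
  have h1 : (1 : ℝ) - x ≠ 0 := by cases hx; intro h; linarith [sub_eq_zero.mp h]
  have := (hasDerivAt_id x).div ((hasDerivAt_id x).const_sub 1) h1
  refine this.congr_deriv (Eq.symm ?_)
  simp only [id]
  field_simp
  ring

lemma subst_image : (fun x : ℝ => x / (1-x)) '' (Ioo 0 1) = Ioi 0 := by
  ext y
  constructor
  · rintro ⟨x, hx, rfl⟩
    exact div_pos hx.1 (by linarith [hx.2])
  · intro hy
    refine ⟨y / (1+y), ⟨div_pos hy (by linarith [mem_Ioi.mp hy]), ?_⟩, ?_⟩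
    · rw [div_lt_one (by linarith [mem_Ioi.mp hy])]; linarith [mem_Ioi.mp hy]
    · have h1 : (1:ℝ) + y ≠ 0 := by have := mem_Ioi.mp hy; positivity
      field_simp
      ring

lemma subst_inj : InjOn (fun x : ℝ => x / (1-x)) (Ioo 0 1) := by
  intro x hx y hy h
  have h1 : (1:ℝ) - x ≠ 0 := by intro h; linarith [sub_eq_zero.mp h, hx.2]
  have h2 : (1:ℝ) - y ≠ 0 := by intro h; linarith [sub_eq_zero.mp h, hy.2]
  field_simp at h
  linarith

lemma subst_eq (a b : ℝ) {x : ℝ} (hx : x ∈ Ioo (0:ℝ) 1) :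
    |((1-x)^2)⁻¹| • ((x/(1-x)) ^ (a-1) * (1+(x/(1-x))) ^ (-(a+b)))
      = x ^ (a-1) * (1-x) ^ (b-1) := by
  obtain ⟨hx0, hx1⟩ := hx
  have h1 : (0:ℝ) < 1 - x := by linarith
  have e1 : (1:ℝ) + x/(1-x) = (1-x)⁻¹ := by field_simp; ring
  have e2 : ((1-x)⁻¹) ^ (-(a+b)) = (1-x) ^ (a+b) := by
    rw [Real.inv_rpow h1.le, ← Real.rpow_neg h1.le, neg_neg]
  have e3 : (((1-x)^2 : ℝ))⁻¹ = (1-x) ^ (-2 : ℝ) := by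
    rw [show (-2:ℝ) = -((2:ℕ):ℝ) by norm_num, Real.rpow_neg h1.le, Real.rpow_natCast]
  rw [e1, e2, smul_eq_mul, abs_of_pos (by positivity), e3, Real.div_rpow hx0.le h1.le,
    div_eq_mul_inv, ← Real.rpow_neg h1.le]
  calc (1-x) ^ (-2:ℝ) * (x ^ (a-1) * (1-x) ^ (-(a-1)) * (1-x) ^ (a+b))
      = x ^ (a-1) * ((1-x) ^ (-2:ℝ) * (1-x) ^ (-(a-1)) * (1-x) ^ (a+b)) := by ring
    _ = x ^ (a-1) * (1-x) ^ (b-1) := by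
        rw [← Real.rpow_add h1, ← Real.rpow_add h1]
        congr 1
        ring

lemma cbeta_ofReal (a b : ℝ) :
    Complex.betaIntegral a b = ((∫ x in (0:ℝ)..1, x ^ (a-1) * (1-x) ^ (b-1) : ℝ) : ℂ) := by
  rw [Complex.betaIntegral, ← intervalIntegral.integral_ofReal]
  apply intervalIntegral.integral_congr
  intro x hx
  rw [uIcc_of_le zero_le_one] at hx
  push_cast
  rw [Complex.ofReal_cpow hx.1, Complex.ofReal_cpow (by linarith [hx.2] : (0:ℝ) ≤ 1 - x)]
  push_cast
  ring

lemma realBeta_s3 (a b : ℝ) (ha : 0 < a) (hb : 0 < b) :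
    ∫ x in (0:ℝ)..1, x ^ (a-1) * (1-x) ^ (b-1) = Gamma a * Gamma b / Gamma (a+b) := by
  have h := Complex.Gamma_mul_Gamma_eq_betaIntegral (s := a) (t := b) (by simpa) (by simpa)
  rw [cbeta_ofReal, ← Complex.ofReal_add, Complex.Gamma_ofReal, Complex.Gamma_ofReal,
    Complex.Gamma_ofReal, ← Complex.ofReal_mul, ← Complex.ofReal_mul] at h
  have h2 := Complex.ofReal_injective h
  have hpos : Gamma (a+b) ≠ 0 := (Real.Gamma_pos_of_pos (by linarith)).ne'
  field_simp
  linarith [h2]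

lemma betaIoi_s3 (a b : ℝ) (ha : 0 < a) (hb : 0 < b) :
    ∫ t in Ioi (0:ℝ), t ^ (a-1) * (1+t) ^ (-(a+b)) = Gamma a * Gamma b / Gamma (a+b) := by
  rw [← subst_image, integral_image_eq_integral_abs_deriv_smul measurableSet_Ioo
    (fun x hx => (subst_deriv hx).hasDerivWithinAt) subst_inj]
  rw [setIntegral_congr_fun measurableSet_Ioo (fun x hx => subst_eq a b hx),
    ← MeasureTheory.integral_Ioc_eq_integral_Ioo,
    ← intervalIntegral.integral_of_le zero_le_one]
  exact realBeta_s3 a b ha hb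

lemma betaIoi_integrable (a b : ℝ) (ha : 0 < a) (hb : 0 < b) :
    IntegrableOn (fun t : ℝ => t ^ (a-1) * (1+t) ^ (-(a+b))) (Ioi 0) := by
  rw [← subst_image]
  rw [integrableOn_image_iff_integrableOn_abs_deriv_smul measurableSet_Ioo
    (fun x hx => (subst_deriv hx).hasDerivWithinAt) subst_inj]
  exact (beta_integrand_integrable a b ha hb).congr_fun
    (fun x hx => (subst_eq a b hx).symm) measurableSet_Ioo


section aux
variable {α β : ℝ}

lemma main_aux (α β : ℝ) (hα₁ : 1 < α) (hα₂ : α < 2) (hβ₀ : 0 < β) (hβ : β < α - 1)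
    (hbeta : ∫ t in Ioi (0:ℝ), t ^ (1-α) * (1+t) ^ (β-1)
        = Gamma (2-α) * Gamma (α-1-β) / Gamma (1-β))
    (hbetaInt : IntegrableOn (fun t : ℝ => t ^ (1-α) * (1+t) ^ (β-1)) (Ioi 0)) :
    ∫ z in Ioi (0 : ℝ),
        ((1 + z) ^ β - 1) * z *
          (α * (α - 1) / (Real.Gamma α * Real.Gamma (2 - α)) * z ^ (-1 - α))
      = α * β * Real.Gamma (α - β - 1) / (Real.Gamma α * Real.Gamma (1 - β)) := by
  set C : ℝ := α * (α - 1) / (Real.Gamma α * Real.Gamma (2 - α)) with hC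
  set u : ℝ → ℝ := fun z => (1+z) ^ β - 1 with hu_def
  set u' : ℝ → ℝ := fun z => β * (1+z) ^ (β-1) with hu'_def
  set v : ℝ → ℝ := fun z => z ^ (1-α) * (1-α)⁻¹ with hv_def
  set v' : ℝ → ℝ := fun z => z ^ (-α) with hv'_def
  have hα1 : (1:ℝ) - α ≠ 0 := by intro h; nlinarith [sub_eq_zero.mp h]
  -- derivatives
  have hu : ∀ x ∈ Ioi (0:ℝ), HasDerivAt u (u' x) x := by
    intro x hx
    have h0 : (0:ℝ) < x := hx
    have h := (((hasDerivAt_id x).const_add 1).rpow_const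
      (p := β) (Or.inl (by positivity))).sub_const 1
    refine h.congr_deriv (Eq.symm ?_)
    simp [hu'_def, mul_comm]
  have hv : ∀ x ∈ Ioi (0:ℝ), HasDerivAt v (v' x) x := by
    intro x hx
    have h0 : (0:ℝ) < x := hx
    have h := (Real.hasDerivAt_rpow_const (x := x) (p := 1-α)
      (Or.inl h0.ne')).mul_const (1-α)⁻¹
    refine h.congr_deriv (Eq.symm ?_)
    show x ^ (-α) = (1-α) * x ^ (1-α-1) * (1-α)⁻¹
    rw [show (1:ℝ)-α-1 = -α by ring]
    field_simp
  -- integrability of u * v'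
  have hmeas : AEStronglyMeasurable (u * v') (volume.restrict (Ioi (0:ℝ))) := by
    apply ContinuousOn.aestronglyMeasurable _ measurableSet_Ioi
    intro z hz
    have h0 : (0:ℝ) < z := hz
    apply ContinuousAt.continuousWithinAt
    exact ((((continuous_const.add continuous_id).continuousAt).rpow_const
      (Or.inl (by show (1:ℝ) + z ≠ 0; positivity))).sub continuousAt_const).mul
      ((continuousAt_id).rpow_const (Or.inl h0.ne'))
  have huv' : IntegrableOn (u * v') (Ioi 0) := by
    rw [show Ioi (0:ℝ) = Ioc 0 1 ∪ Ioi 1 from (Ioc_union_Ioi_eq_Ioi zero_le_one).symm]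
    apply IntegrableOn.union
    · -- on (0,1]: bounded by β * z^(1-α)
      have hg : IntegrableOn (fun z : ℝ => β * z ^ (1-α)) (Ioc 0 1) :=
        ((intervalIntegral.intervalIntegrable_rpow' (by linarith : (-1:ℝ) < 1-α)).1).const_mul β
      apply hg.mono' (hmeas.mono_set Ioc_subset_Ioi_self)
      refine (ae_restrict_iff' measurableSet_Ioc).mpr (ae_of_all _ fun z hz => ?_)
      have h0 : (0:ℝ) < z := hz.1
      have h1 : (1:ℝ) ≤ (1+z) ^ β :=
        Real.one_le_rpow (by linarith) hβ₀.le
      have h2 : (1+z) ^ β ≤ 1 + β * z :=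
        rpow_one_add_le_one_add_mul_self (by linarith) hβ₀.le (by linarith)
      have h3 : (0:ℝ) ≤ z ^ (-α) := Real.rpow_nonneg h0.le _
      show ‖((1+z) ^ β - 1) * z ^ (-α)‖ ≤ β * z ^ (1-α)
      rw [Real.norm_of_nonneg (by nlinarith)]
      calc ((1+z) ^ β - 1) * z ^ (-α) ≤ (β * z) * z ^ (-α) := by nlinarith
        _ = β * z ^ (1-α) := by
            rw [show (1:ℝ)-α = 1 + -α by ring, Real.rpow_add h0, Real.rpow_one]; ring
    · -- on (1,∞): bounded by 2^β * z^(β-α)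
      have hg : IntegrableOn (fun z : ℝ => (2:ℝ) ^ β * z ^ (β-α)) (Ioi 1) :=
        (integrableOn_Ioi_rpow_of_lt (by linarith : β-α < -1) zero_lt_one).const_mul _
      apply hg.mono' (hmeas.mono_set (Ioi_subset_Ioi zero_le_one))
      refine (ae_restrict_iff' measurableSet_Ioi).mpr (ae_of_all _ fun z hz => ?_)
      have h1 : (1:ℝ) < z := hz
      have h0 : (0:ℝ) < z := by linarith
      have hle : (1:ℝ) ≤ (1+z) ^ β := Real.one_le_rpow (by linarith) hβ₀.le
      have h3 : (0:ℝ) ≤ z ^ (-α) := Real.rpow_nonneg h0.le _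
      have h2 : (1+z) ^ β ≤ 2 ^ β * z ^ β := by
        rw [← Real.mul_rpow (by norm_num) h0.le]
        exact Real.rpow_le_rpow (by linarith) (by linarith) hβ₀.le
      show ‖((1+z) ^ β - 1) * z ^ (-α)‖ ≤ 2 ^ β * z ^ (β-α)
      rw [Real.norm_of_nonneg (by nlinarith)]
      calc ((1+z) ^ β - 1) * z ^ (-α) ≤ (2 ^ β * z ^ β) * z ^ (-α) := by nlinarith
        _ = 2 ^ β * z ^ (β-α) := by
            rw [show β-α = β + -α by ring, Real.rpow_add h0]; ring
  -- integrability of u' * v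
  have hfun : u' * v = fun z => β * (1-α)⁻¹ * (z ^ (1-α) * (1+z) ^ (β-1)) := by
    funext z
    show (β * (1+z) ^ (β-1)) * (z ^ (1-α) * (1-α)⁻¹) = _
    ring
  have hu'v : IntegrableOn (u' * v) (Ioi 0) := by
    rw [hfun]
    exact hbetaInt.const_mul _
  -- limit at 0+
  have h_zero : Tendsto (u * v) (𝓝[>] (0:ℝ)) (𝓝 0) := by
    have T1 : Tendsto (fun z : ℝ => ((1+z) ^ β - 1) / z) (𝓝[>] 0) (𝓝 β) := by
      have hD : HasDerivAt (fun z : ℝ => (1+z) ^ β) β 0 := by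
        have h := ((hasDerivAt_id (0:ℝ)).const_add 1).rpow_const (p := β)
          (Or.inl (by norm_num))
        refine h.congr_deriv (Eq.symm ?_)
        simp
      have := (hasDerivAt_iff_tendsto_slope.mp hD).mono_left
        (nhdsWithin_mono 0 (fun z hz => ne_of_gt hz))
      apply this.congr
      intro z
      simp [slope, div_eq_inv_mul]
    have T2 : Tendsto (fun z : ℝ => z ^ (2-α) * (1-α)⁻¹) (𝓝[>] 0) (𝓝 0) := by
      have : Tendsto (fun z : ℝ => z ^ (2-α)) (𝓝[>] 0) (𝓝 ((0:ℝ) ^ (2-α))) :=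
        (tendsto_nhdsWithin_of_tendsto_nhds (ContinuousAt.tendsto
          (Real.continuousAt_rpow_const 0 (2-α) (Or.inr (by linarith)))))
      rw [Real.zero_rpow (by intro h; nlinarith [h])] at this
      simpa using this.mul_const (1-α)⁻¹
    have := T1.mul T2
    rw [mul_zero] at this
    apply this.congr'
    filter_upwards [self_mem_nhdsWithin] with z hz
    have h0 : (0:ℝ) < z := hz
    simp only [Pi.mul_apply, hu_def, hv_def]
    rw [show (2:ℝ)-α = 1 + (1-α) by ring, Real.rpow_add h0, Real.rpow_one]
    field_simp
  -- limit at ∞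
  have h_infty : Tendsto (u * v) atTop (𝓝 0) := by
    have T3 : Tendsto (fun z : ℝ => z ^ (1-α)) atTop (𝓝 0) := by
      have := tendsto_rpow_neg_atTop (by linarith : (0:ℝ) < α - 1)
      apply this.congr
      intro z
      rw [show -(α-1) = 1-α by ring]
    have T4 : Tendsto (fun z : ℝ => (1+z) ^ β * z ^ (1-α)) atTop (𝓝 0) := by
      have TA : Tendsto (fun z : ℝ => (1+z⁻¹) ^ β) atTop (𝓝 1) := by
        have h1 : Tendsto (fun z : ℝ => 1+z⁻¹) atTop (𝓝 1) := by
          simpa using tendsto_inv_atTop_zero.const_add (1:ℝ)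
        have := h1.rpow_const (p := β) (Or.inl one_ne_zero)
        simpa using this
      have TB : Tendsto (fun z : ℝ => z ^ (β+1-α)) atTop (𝓝 0) := by
        have := tendsto_rpow_neg_atTop (by linarith : (0:ℝ) < α - 1 - β)
        apply this.congr
        intro z
        rw [show -(α-1-β) = β+1-α by ring]
      have := TA.mul TB
      rw [one_mul] at this
      apply this.congr'
      filter_upwards [eventually_gt_atTop (0:ℝ)] with z hz
      have hz' : (0:ℝ) < 1 + z⁻¹ := by positivity
      rw [show (1:ℝ)+z = z * (1+z⁻¹) by rw [mul_add, mul_one, mul_inv_cancel₀ hz.ne']; ring, Real.mul_rpow hz.le hz'.le,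
        show β+1-α = β + (1-α) by ring, Real.rpow_add hz]
      ring
    have := (T4.sub T3).mul_const (1-α)⁻¹
    rw [sub_zero, zero_mul] at this
    apply this.congr
    intro z
    simp only [Pi.mul_apply, hu_def, hv_def]
    ring
  -- integration by parts
  have IBP := integral_Ioi_mul_deriv_eq_deriv_mul hu hv huv' hu'v h_zero h_infty
  -- compute ∫ u' v
  have hu'v_int : ∫ z in Ioi (0:ℝ), u' z * v z
      = β * (1-α)⁻¹ * (Gamma (2-α) * Gamma (α-1-β) / Gamma (1-β)) := by
    rw [← hbeta, ← MeasureTheory.integral_const_mul]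
    apply setIntegral_congr_fun measurableSet_Ioi
    intro z hz
    simp only [hu'_def, hv_def]
    ring
  rw [hu'v_int] at IBP
  -- rewrite the target integrand
  have key : ∫ z in Ioi (0 : ℝ),
      ((1 + z) ^ β - 1) * z * (C * z ^ (-1 - α)) = C * ∫ z in Ioi (0:ℝ), u z * v' z := by
    rw [← MeasureTheory.integral_const_mul]
    apply setIntegral_congr_fun measurableSet_Ioi
    intro z hz
    have h0 : (0:ℝ) < z := hz
    simp only [hu_def, hv'_def]
    rw [show -α = (-1-α) + 1 by ring, Real.rpow_add h0, Real.rpow_one]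
    ring
  rw [key, IBP, hC]
  have hG1 : Real.Gamma α ≠ 0 := (Real.Gamma_pos_of_pos (by linarith)).ne'
  have hG2 : Real.Gamma (2-α) ≠ 0 := (Real.Gamma_pos_of_pos (by linarith)).ne'
  have hG3 : Real.Gamma (1-β) ≠ 0 := (Real.Gamma_pos_of_pos (by linarith)).ne'
  rw [show α - 1 - β = α - β - 1 by ring]
  field_simp
  ring
end aux


/-- Lemma 3.2, third identity: for `α ∈ (1,2)` and `0 < β < α − 1`,
`∫_0^∞ [(1+z)^β − 1] z μ_α(dz) = αβΓ(α−β−1)/(Γ(α)Γ(1−β))`, where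
`μ_α(dz) = (α(α−1)/(Γ(α)Γ(2−α))) z^{−1−α} dz` on `(0,∞)`. -/
theorem stable_measure_integral_three (α β : ℝ) (hα₁ : 1 < α) (hα₂ : α < 2)
    (hβ₀ : 0 < β) (hβ : β < α - 1) :
    ∫ z in Ioi (0 : ℝ),
        ((1 + z) ^ β - 1) * z *
          (α * (α - 1) / (Real.Gamma α * Real.Gamma (2 - α)) * z ^ (-1 - α))
      = α * β * Real.Gamma (α - β - 1) / (Real.Gamma α * Real.Gamma (1 - β)) := by
  have ha : (0:ℝ) < 2 - α := by linarith
  have hb : (0:ℝ) < α - 1 - β := by linarith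
  have e : (fun t : ℝ => t ^ (1-α) * (1+t) ^ (β-1))
      = fun t => t ^ ((2-α)-1) * (1+t) ^ (-((2-α)+(α-1-β))) := by
    funext t
    rw [show (2-α)-1 = 1-α by ring, show -((2-α)+(α-1-β)) = β-1 by ring]
  have hbeta : ∫ t in Ioi (0:ℝ), t ^ (1-α) * (1+t) ^ (β-1)
      = Gamma (2-α) * Gamma (α-1-β) / Gamma (1-β) := by
    rw [e, betaIoi_s3 (2-α) (α-1-β) ha hb, show (2-α)+(α-1-β) = 1-β by ring]
  have hbetaInt : IntegrableOn (fun t : ℝ => t ^ (1-α) * (1+t) ^ (β-1)) (Ioi 0) := by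
    rw [e]
    exact betaIoi_integrable (2-α) (α-1-β) ha hb
  exact main_aux α β hα₁ hα₂ hβ₀ hβ hbeta hbetaInt
end

section
/- Assume p < κ₂ q/(q + 1 − θ₂). Then there exist constants β, ρ, σ₀, ε₀, z* > 0 and 0 < δ < β^{−1} such that for all 0 < σ < σ₀ and all x, y with 0 < x, y ≤ ε₀ and y x^{−β} ≥ z*, one has H̃_σ(x,y) > 0. -/
open Real

lemma exists_eps_aux (c e t : ℝ) (hc : 0 < c) (he : 0 < e) (ht : 0 < t) :
    ∃ ε : ℝ, 0 < ε ∧ ε ≤ 1 ∧ c * ε ^ e ≤ t := by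
  set m := min 1 (t / c) with hm
  have hm0 : 0 < m := lt_min one_pos (div_pos ht hc)
  have hm1 : m ≤ 1 := min_le_left _ _
  refine ⟨m ^ (1 / e), rpow_pos_of_pos hm0 _, ?_, ?_⟩
  · exact rpow_le_one hm0.le hm1 (by positivity)
  · have h1 : (m ^ (1 / e)) ^ e = m := by
      rw [← rpow_mul hm0.le, one_div_mul_cancel he.ne', rpow_one]
    rw [h1]
    calc c * m ≤ c * (t / c) := mul_le_mul_of_nonneg_left (min_le_right _ _) hc.le
      _ = t := by field_simp

lemma bracket_lower (a b η₁ η₂ κ₁ κ₂ p q θ₁ θ₂ β σ ε₀ x y : ℝ)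
    (ha : 0 < a) (hb : 0 < b) (hη₁ : 0 < η₁) (hη₂ : 0 < η₂) (hβ : 0 < β)
    (hθ₂' : θ₂ < 1)
    (hβθ : β * (θ₂ - 1) + κ₂ = β * q)
    (hβqp : p ≤ β * q)
    (hε1 : η₂ * ε₀ ^ (β * q - p) ≤ β * a / 4)
    (hσ1 : 1 / 2 ≤ 1 - σ) (hσ2 : 1 + σ ≤ 3 / 2)
    (hx : 0 < x) (hxe : x ≤ ε₀) (hy : 0 < y) (hxy : x ^ β ≤ y) :
    (β * a / 4) * x ^ p - (3 / 2) * b * y ^ q ≤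
      β * a * (1 - σ) * x ^ p - (1 + σ) * b * y ^ q
        + β * η₁ * x ^ (θ₁ - 1) * y ^ κ₁ - η₂ * y ^ (θ₂ - 1) * x ^ κ₂ := by
  have hxp : (0:ℝ) < x ^ p := rpow_pos_of_pos hx p
  have hyq : (0:ℝ) < y ^ q := rpow_pos_of_pos hy q
  have hη₁t : (0:ℝ) ≤ β * η₁ * x ^ (θ₁ - 1) * y ^ κ₁ := by positivity
  have h1 : y ^ (θ₂ - 1) ≤ (x ^ β) ^ (θ₂ - 1) :=
    rpow_le_rpow_of_nonpos (rpow_pos_of_pos hx β) hxy (by linarith)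
  have h2 : (x ^ β) ^ (θ₂ - 1) = x ^ (β * (θ₂ - 1)) := by rw [← rpow_mul hx.le]
  have h3 : y ^ (θ₂ - 1) * x ^ κ₂ ≤ x ^ (β * q - p) * x ^ p := by
    calc y ^ (θ₂ - 1) * x ^ κ₂ ≤ x ^ (β * (θ₂ - 1)) * x ^ κ₂ := by
          rw [← h2]
          exact mul_le_mul_of_nonneg_right h1 (rpow_pos_of_pos hx κ₂).le
      _ = x ^ (β * (θ₂ - 1) + κ₂) := (rpow_add hx _ _).symm
      _ = x ^ ((β * q - p) + p) := by rw [hβθ]; ring_nf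
      _ = x ^ (β * q - p) * x ^ p := rpow_add hx _ _
  have h4 : x ^ (β * q - p) ≤ ε₀ ^ (β * q - p) := rpow_le_rpow hx.le hxe (by linarith)
  have h5 : η₂ * (y ^ (θ₂ - 1) * x ^ κ₂) ≤ (β * a / 4) * x ^ p := by
    calc η₂ * (y ^ (θ₂ - 1) * x ^ κ₂) ≤ η₂ * (ε₀ ^ (β * q - p) * x ^ p) := by
          apply mul_le_mul_of_nonneg_left _ hη₂.le
          calc y ^ (θ₂ - 1) * x ^ κ₂ ≤ x ^ (β * q - p) * x ^ p := h3
            _ ≤ ε₀ ^ (β * q - p) * x ^ p := mul_le_mul_of_nonneg_right h4 hxp.le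
      _ = (η₂ * ε₀ ^ (β * q - p)) * x ^ p := by ring
      _ ≤ (β * a / 4) * x ^ p := mul_le_mul_of_nonneg_right hε1 hxp.le
  nlinarith [mul_le_mul_of_nonneg_right hσ2 hyq.le, mul_le_mul_of_nonneg_right hσ1 hxp.le,
    mul_pos (mul_pos hβ ha) hxp, mul_pos hb hyq]

set_option maxHeartbeats 2000000 in
/-- Lemma 3.11 (case (iia)): there exist `β, ρ, σ₀, ε₀, z* > 0` and `0 < δ < β⁻¹`
such that for all `0 < σ < σ₀`, `0 < x, y ≤ ε₀` with `y x^(−β) ≥ z*`, one has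
`H̃_σ(x,y) := δ x^(βδ) y^(−δ) [βa(1−σ)x^p − (1+σ)b y^q + βη₁ x^(θ₁−1) y^(κ₁)
  − η₂ y^(θ₂−1) x^(κ₂)] + bρ(1−σ) y^(ρ+q) + ρη₂ y^(ρ+θ₂−1) x^(κ₂) > 0`. -/
theorem Htilde_pos_case_iia (a b η₁ η₂ κ₁ κ₂ p q θ₁ θ₂ : ℝ)
    (ha : 0 < a) (hb : 0 < b) (hη₁ : 0 < η₁) (hη₂ : 0 < η₂)
    (hκ₁ : 0 < κ₁) (hκ₂ : 0 < κ₂) (hp : 0 ≤ p) (hq : 0 ≤ q)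
    (hθ₁ : 1 ≤ θ₁) (hθ₂ : 0 ≤ θ₂) (hθ₂' : θ₂ < 1)
    (hcond : p < κ₂ * q / (q + 1 - θ₂)) :
    ∃ β ρ σ₀ ε₀ zstar δ : ℝ,
      0 < β ∧ 0 < ρ ∧ 0 < σ₀ ∧ 0 < ε₀ ∧ 0 < zstar ∧ 0 < δ ∧ δ < β⁻¹ ∧
      ∀ σ : ℝ, 0 < σ → σ < σ₀ → ∀ x y : ℝ,
        0 < x → x ≤ ε₀ → 0 < y → y ≤ ε₀ → y * x ^ (-β) ≥ zstar →
        0 < δ * (x ^ (β * δ) * y ^ (-δ)) *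
              (β * a * (1 - σ) * x ^ p - (1 + σ) * b * y ^ q
                + β * η₁ * x ^ (θ₁ - 1) * y ^ κ₁ - η₂ * y ^ (θ₂ - 1) * x ^ κ₂)
            + b * ρ * (1 - σ) * y ^ (ρ + q) + ρ * η₂ * y ^ (ρ + θ₂ - 1) * x ^ κ₂ := by
  have hqθ : 0 < q + 1 - θ₂ := by linarith
  set β := κ₂ / (q + 1 - θ₂) with hβdef
  have hβ : 0 < β := div_pos hκ₂ hqθ
  have hβq : β * q = κ₂ * q / (q + 1 - θ₂) := by rw [hβdef]; ring
  have hpβq : p < β * q := by rw [hβq]; exact hcond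
  have hβqp0 : 0 < β * q - p := by linarith
  have hβθ : β * (θ₂ - 1) + κ₂ = β * q := by
    rw [hβdef]; field_simp; ring
  set δ := β⁻¹ / 2 with hδdef
  have hδ0 : 0 < δ := by positivity
  have hδβ : δ < β⁻¹ := half_lt_self (inv_pos.2 hβ)
  have hq0 : 0 < q := by
    rcases hq.lt_or_eq with h | h
    · exact h
    · exfalso; rw [← h] at hcond; simp at hcond; linarith
  obtain ⟨ε₁, hε₁0, hε₁1, hε₁⟩ :=
    exists_eps_aux η₂ (β * q - p) (β * a / 4) hη₂ hβqp0 (by positivity)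
  clear_value β δ
  by_cases hp0 : p = 0
  · -- p = 0 : the bracket is always nonnegative
    obtain ⟨ε₃, hε₃0, hε₃1, hε₃⟩ :=
      exists_eps_aux ((3 : ℝ)/2 * b) q (β * a / 4) (by positivity) hq0 (by positivity)
    refine ⟨β, 1, 1/2, min ε₁ ε₃, 1, δ, hβ, one_pos, by norm_num,
      lt_min hε₁0 hε₃0, one_pos, hδ0, hδβ, ?_⟩
    intro σ hσ0 hσh x y hx hxe hy hye hz
    have hσ1 : (1:ℝ)/2 ≤ 1 - σ := by linarith
    have hσ2 : 1 + σ ≤ (3:ℝ)/2 := by linarith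
    have hxb : 0 < x ^ β := rpow_pos_of_pos hx β
    have hxy : x ^ β ≤ y := by
      rw [ge_iff_le, Real.rpow_neg hx.le, ← div_eq_mul_inv, le_div_iff₀ hxb] at hz
      linarith
    have hεm : (0:ℝ) < min ε₁ ε₃ := lt_min hε₁0 hε₃0
    have hε1' : η₂ * (min ε₁ ε₃) ^ (β * q - p) ≤ β * a / 4 := by
      calc η₂ * (min ε₁ ε₃) ^ (β * q - p) ≤ η₂ * ε₁ ^ (β * q - p) :=
            mul_le_mul_of_nonneg_left
              (rpow_le_rpow hεm.le (min_le_left _ _) hβqp0.le) hη₂.le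
        _ ≤ β * a / 4 := hε₁
    have hB := bracket_lower a b η₁ η₂ κ₁ κ₂ p q θ₁ θ₂ β σ (min ε₁ ε₃) x y
      ha hb hη₁ hη₂ hβ hθ₂' hβθ hpβq.le hε1' hσ1 hσ2 hx hxe hy hxy
    have hxp1 : x ^ p = 1 := by rw [hp0, rpow_zero]
    have hyq : y ^ q ≤ ε₃ ^ q :=
      rpow_le_rpow hy.le (le_trans hye (min_le_right _ _)) hq0.le
    have hBpos : 0 ≤ β * a * (1 - σ) * x ^ p - (1 + σ) * b * y ^ q
        + β * η₁ * x ^ (θ₁ - 1) * y ^ κ₁ - η₂ * y ^ (θ₂ - 1) * x ^ κ₂ := by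
      have : (3:ℝ)/2 * b * y ^ q ≤ β * a / 4 := by
        calc (3:ℝ)/2 * b * y ^ q ≤ 3/2 * b * ε₃ ^ q :=
              mul_le_mul_of_nonneg_left hyq (by positivity)
          _ ≤ β * a / 4 := hε₃
      rw [hxp1] at hB ⊢
      linarith
    have hfac : 0 ≤ δ * (x ^ (β * δ) * y ^ (-δ)) := by positivity
    have hT2 : 0 < b * 1 * (1 - σ) * y ^ (1 + q) := by
      have h1 : (0:ℝ) < 1 - σ := by linarith
      simpa using mul_pos (mul_pos hb h1) (rpow_pos_of_pos hy (1 + q))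
    have hT3 : 0 < 1 * η₂ * y ^ (1 + θ₂ - 1) * x ^ κ₂ := by positivity
    linarith [mul_nonneg hfac hBpos]
  · -- p > 0
    have hppos : 0 < p := hp.lt_of_ne (Ne.symm hp0)
    set K := 6 * b / (β * a) with hKdef
    have hK : 0 < K := by positivity
    set ρ := δ * (β * q - p) / (2 * p) with hρdef
    have hρ : 0 < ρ := by positivity
    set c := (3:ℝ)/2 * δ * b * K ^ (β * δ / p) with hcdef
    have hc : 0 < c := by positivity
    obtain ⟨ε₂, hε₂0, hε₂1, hε₂⟩ := exists_eps_aux c ρ (b * ρ / 4) hc hρ (by positivity)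
    clear_value K ρ c
    refine ⟨β, ρ, 1/2, min ε₁ ε₂, 1, δ, hβ, hρ, by norm_num,
      lt_min hε₁0 hε₂0, one_pos, hδ0, hδβ, ?_⟩
    intro σ hσ0 hσh x y hx hxe hy hye hz
    have hσ1 : (1:ℝ)/2 ≤ 1 - σ := by linarith
    have hσ2 : 1 + σ ≤ (3:ℝ)/2 := by linarith
    have hxb : 0 < x ^ β := rpow_pos_of_pos hx β
    have hxy : x ^ β ≤ y := by
      rw [ge_iff_le, Real.rpow_neg hx.le, ← div_eq_mul_inv, le_div_iff₀ hxb] at hz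
      linarith
    have hεm : (0:ℝ) < min ε₁ ε₂ := lt_min hε₁0 hε₂0
    have hε1' : η₂ * (min ε₁ ε₂) ^ (β * q - p) ≤ β * a / 4 := by
      calc η₂ * (min ε₁ ε₂) ^ (β * q - p) ≤ η₂ * ε₁ ^ (β * q - p) :=
            mul_le_mul_of_nonneg_left
              (rpow_le_rpow hεm.le (min_le_left _ _) hβqp0.le) hη₂.le
        _ ≤ β * a / 4 := hε₁
    have hε2' : c * (min ε₁ ε₂) ^ ρ ≤ b * ρ / 4 := by
      calc c * (min ε₁ ε₂) ^ ρ ≤ c * ε₂ ^ ρ :=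
            mul_le_mul_of_nonneg_left
              (rpow_le_rpow hεm.le (min_le_right _ _) hρ.le) hc.le
        _ ≤ b * ρ / 4 := hε₂
    have hB := bracket_lower a b η₁ η₂ κ₁ κ₂ p q θ₁ θ₂ β σ (min ε₁ ε₂) x y
      ha hb hη₁ hη₂ hβ hθ₂' hβθ hpβq.le hε1' hσ1 hσ2 hx hxe hy hxy
    have hxp : (0:ℝ) < x ^ p := rpow_pos_of_pos hx p
    have hfac : 0 ≤ δ * (x ^ (β * δ) * y ^ (-δ)) := by positivity
    have hT2 : (b * ρ / 2) * y ^ (ρ + q) ≤ b * ρ * (1 - σ) * y ^ (ρ + q) := by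
      have h2 : b * ρ / 2 ≤ b * ρ * (1 - σ) := by nlinarith [mul_pos hb hρ]
      exact mul_le_mul_of_nonneg_right h2 (rpow_nonneg hy.le _)
    have hT3 : 0 < ρ * η₂ * y ^ (ρ + θ₂ - 1) * x ^ κ₂ := by positivity
    set Y := y ^ (ρ + q) with hYdef
    have hY : 0 < Y := rpow_pos_of_pos hy (ρ + q)
    clear_value Y
    by_cases hcase : (3:ℝ)/2 * b * y ^ q ≤ (β * a / 4) * x ^ p
    · have hBpos : 0 ≤ β * a * (1 - σ) * x ^ p - (1 + σ) * b * y ^ q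
          + β * η₁ * x ^ (θ₁ - 1) * y ^ κ₁ - η₂ * y ^ (θ₂ - 1) * x ^ κ₂ := by linarith
      linarith [mul_nonneg hfac hBpos, mul_pos (mul_pos (mul_pos hb hρ) (by linarith : (0:ℝ) < 1 - σ)) hY,
        hT3]
    · push_neg at hcase
      -- x^p < K * y^q
      have hxPK : x ^ p < K * y ^ q := by
        rw [hKdef, div_mul_eq_mul_div, lt_div_iff₀ (by positivity : (0:ℝ) < β * a)]
        linarith
      -- bound x^(β δ)
      have he1 : p * (β * δ / p) = β * δ := by field_simp [hppos.ne']
      have hxbd : x ^ (β * δ) ≤ K ^ (β * δ / p) * y ^ (q * (β * δ / p)) := by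
        have h1 : x ^ (β * δ) = (x ^ p) ^ (β * δ / p) := by
          rw [← rpow_mul hx.le, he1]
        have h2 : (x ^ p) ^ (β * δ / p) ≤ (K * y ^ q) ^ (β * δ / p) :=
          rpow_le_rpow hxp.le hxPK.le (by positivity)
        have h3 : (K * y ^ q) ^ (β * δ / p) = K ^ (β * δ / p) * y ^ (q * (β * δ / p)) := by
          rw [mul_rpow hK.le (rpow_nonneg hy.le q), ← rpow_mul hy.le]
        rw [h1, ← h3]; exact h2
      have hexp : q * (β * δ / p) + (-δ + q) = ρ + (ρ + q) := by
        rw [hρdef]; field_simp [hppos.ne']; ring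
      have hprod : x ^ (β * δ) * (y ^ (-δ) * y ^ q) ≤ K ^ (β * δ / p) * ((min ε₁ ε₂) ^ ρ * Y) := by
        calc x ^ (β * δ) * (y ^ (-δ) * y ^ q)
            = x ^ (β * δ) * y ^ (-δ + q) := by rw [rpow_add hy]
          _ ≤ K ^ (β * δ / p) * y ^ (q * (β * δ / p)) * y ^ (-δ + q) :=
              mul_le_mul_of_nonneg_right hxbd (rpow_pos_of_pos hy _).le
          _ = K ^ (β * δ / p) * y ^ (q * (β * δ / p) + (-δ + q)) := by
              rw [mul_assoc, ← rpow_add hy]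
          _ = K ^ (β * δ / p) * (y ^ ρ * Y) := by rw [hexp, rpow_add hy, ← hYdef]
          _ ≤ K ^ (β * δ / p) * ((min ε₁ ε₂) ^ ρ * Y) := by
              apply mul_le_mul_of_nonneg_left _ (rpow_nonneg hK.le _)
              exact mul_le_mul_of_nonneg_right (rpow_le_rpow hy.le hye hρ.le) hY.le
      have hBneg : -((3:ℝ)/2 * b * y ^ q) ≤ β * a * (1 - σ) * x ^ p - (1 + σ) * b * y ^ q
          + β * η₁ * x ^ (θ₁ - 1) * y ^ κ₁ - η₂ * y ^ (θ₂ - 1) * x ^ κ₂ := by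
        have h0 : (0:ℝ) < (β * a / 4) * x ^ p := by positivity
        linarith
      have hT1 : -((b * ρ / 4) * Y) ≤ δ * (x ^ (β * δ) * y ^ (-δ)) *
          (β * a * (1 - σ) * x ^ p - (1 + σ) * b * y ^ q
            + β * η₁ * x ^ (θ₁ - 1) * y ^ κ₁ - η₂ * y ^ (θ₂ - 1) * x ^ κ₂) := by
        calc -((b * ρ / 4) * Y) ≤ -(c * (min ε₁ ε₂) ^ ρ * Y) := by
              have := mul_le_mul_of_nonneg_right hε2' hY.le; linarith
          _ ≤ -((3:ℝ)/2 * δ * b * (x ^ (β * δ) * (y ^ (-δ) * y ^ q))) := by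
              have h := mul_le_mul_of_nonneg_left hprod (by positivity : (0:ℝ) ≤ (3:ℝ)/2 * δ * b)
              rw [hcdef]; linarith [h]
          _ = δ * (x ^ (β * δ) * y ^ (-δ)) * (-((3:ℝ)/2 * b * y ^ q)) := by ring
          _ ≤ _ := mul_le_mul_of_nonneg_left hBneg hfac
      have hbY : (0:ℝ) < (b * ρ / 4) * Y := by positivity
      linarith [hT1, hT2, hT3, hbY]
end

section
/- Assume p = q = 0 and b/a < κ₂/(1 − θ₂). Then there exist constants β, ρ, σ₀, ε₀, z* > 0 and 0 < δ < β^{−1} such that for all 0 < σ < σ₀ and all x, y with 0 < x, y ≤ ε₀ and y x^{−β} ≥ z*, one has H̃_σ(x,y) > 0. -/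
open Real

/-- Lemma 3.11 (case (iib)): there exist `β, ρ, σ₀, ε₀, z* > 0` and `0 < δ < β⁻¹`
such that for all `0 < σ < σ₀`, `0 < x, y ≤ ε₀` with `y x^(−β) ≥ z*`, one has
`H̃_σ(x,y) := δ x^(βδ) y^(−δ) [βa(1−σ)x^p − (1+σ)b y^q + βη₁ x^(θ₁−1) y^(κ₁)
  − η₂ y^(θ₂−1) x^(κ₂)] + bρ(1−σ) y^(ρ+q) + ρη₂ y^(ρ+θ₂−1) x^(κ₂) > 0`. -/
theorem Htilde_pos_case_iib (a b η₁ η₂ κ₁ κ₂ p q θ₁ θ₂ : ℝ)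
    (ha : 0 < a) (hb : 0 < b) (hη₁ : 0 < η₁) (hη₂ : 0 < η₂)
    (hκ₁ : 0 < κ₁) (hκ₂ : 0 < κ₂) (hp : 0 ≤ p) (hq : 0 ≤ q)
    (hθ₁ : 1 ≤ θ₁) (hθ₂ : 0 ≤ θ₂) (hθ₂' : θ₂ < 1)
    (hp0 : p = 0) (hq0 : q = 0) (hcond : b / a < κ₂ / (1 - θ₂)) :
    ∃ β ρ σ₀ ε₀ zstar δ : ℝ,
      0 < β ∧ 0 < ρ ∧ 0 < σ₀ ∧ 0 < ε₀ ∧ 0 < zstar ∧ 0 < δ ∧ δ < β⁻¹ ∧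
      ∀ σ : ℝ, 0 < σ → σ < σ₀ → ∀ x y : ℝ,
        0 < x → x ≤ ε₀ → 0 < y → y ≤ ε₀ → y * x ^ (-β) ≥ zstar →
        0 < δ * (x ^ (β * δ) * y ^ (-δ)) *
              (β * a * (1 - σ) * x ^ p - (1 + σ) * b * y ^ q
                + β * η₁ * x ^ (θ₁ - 1) * y ^ κ₁ - η₂ * y ^ (θ₂ - 1) * x ^ κ₂)
            + b * ρ * (1 - σ) * y ^ (ρ + q) + ρ * η₂ * y ^ (ρ + θ₂ - 1) * x ^ κ₂ := by
  subst hp0 hq0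
  have h1θ : (0:ℝ) < 1 - θ₂ := by linarith
  set β : ℝ := (b / a + κ₂ / (1 - θ₂)) / 2 with hβdef
  have hβ1 : b / a < β := by simp only [hβdef]; linarith
  have hβ2 : β < κ₂ / (1 - θ₂) := by simp only [hβdef]; linarith
  have hβ : 0 < β := lt_trans (div_pos hb ha) hβ1
  set c : ℝ := β * a - b with hcdef
  have hc : 0 < c := by
    have := (div_lt_iff₀ ha).mp hβ1
    simpa [hcdef] using by linarith
  set γ : ℝ := κ₂ - β * (1 - θ₂) with hγdef
  have hγ : 0 < γ := by
    have := (lt_div_iff₀ h1θ).mp hβ2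
    simpa [hγdef] using by linarith
  set σ₀ : ℝ := c / (2 * (β * a + b)) with hσ₀def
  have hab : 0 < β * a + b := by positivity
  have hσ₀ : 0 < σ₀ := by positivity
  set ε₀ : ℝ := min 1 ((c / (2 * η₂)) ^ γ⁻¹) with hε₀def
  have hε₀ : 0 < ε₀ := lt_min one_pos (rpow_pos_of_pos (by positivity) _)
  have hε₀le : ε₀ ≤ (c / (2 * η₂)) ^ γ⁻¹ := min_le_right _ _
  clear_value β c γ σ₀ ε₀
  refine ⟨β, 1, σ₀, ε₀, 1, (2 * β)⁻¹, hβ, one_pos, hσ₀, hε₀, one_pos, by positivity, ?_, ?_⟩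
  · rw [inv_lt_inv₀ (by positivity) hβ]; linarith
  intro σ hσ hσσ₀ x y hx hxε hy hyε hz
  have hσ1 : σ < 1 := by
    have : σ₀ ≤ 2⁻¹ := by
      rw [hσ₀def, div_le_iff₀ (by positivity), hcdef]; ring_nf; nlinarith
    linarith
  -- key estimate on the negative term
  have hxβ : x ^ β ≤ y := by
    have hxβpos : (0:ℝ) < x ^ β := rpow_pos_of_pos hx _
    have := mul_le_mul_of_nonneg_right hz (le_of_lt hxβpos)
    rw [one_mul, mul_assoc, ← rpow_add hx, neg_add_cancel, rpow_zero, mul_one] at this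
    exact this
  have hkey : η₂ * y ^ (θ₂ - 1) * x ^ κ₂ ≤ c / 2 := by
    have h1 : y ^ (θ₂ - 1) ≤ (x ^ β) ^ (θ₂ - 1) :=
      rpow_le_rpow_of_nonpos (rpow_pos_of_pos hx _) hxβ (by linarith)
    have h2 : (x ^ β) ^ (θ₂ - 1) * x ^ κ₂ = x ^ γ := by
      rw [← rpow_mul hx.le, ← rpow_add hx]
      congr 1; rw [hγdef]; ring
    have h3 : x ^ γ ≤ ε₀ ^ γ := rpow_le_rpow hx.le hxε hγ.le
    have h4 : ε₀ ^ γ ≤ c / (2 * η₂) := by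
      calc ε₀ ^ γ ≤ ((c / (2 * η₂)) ^ γ⁻¹) ^ γ :=
            rpow_le_rpow hε₀.le hε₀le hγ.le
        _ = c / (2 * η₂) := by
            rw [← rpow_mul (by positivity), inv_mul_cancel₀ hγ.ne', rpow_one]
    have h5 : y ^ (θ₂ - 1) * x ^ κ₂ ≤ c / (2 * η₂) := by
      calc y ^ (θ₂ - 1) * x ^ κ₂ ≤ (x ^ β) ^ (θ₂ - 1) * x ^ κ₂ :=
            mul_le_mul_of_nonneg_right h1 (rpow_pos_of_pos hx _).le
        _ = x ^ γ := h2
        _ ≤ ε₀ ^ γ := h3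
        _ ≤ c / (2 * η₂) := h4
    calc η₂ * y ^ (θ₂ - 1) * x ^ κ₂ = η₂ * (y ^ (θ₂ - 1) * x ^ κ₂) := by ring
      _ ≤ η₂ * (c / (2 * η₂)) := by
          exact mul_le_mul_of_nonneg_left h5 hη₂.le
      _ = c / 2 := by field_simp
  have hlin : c / 2 < β * a * (1 - σ) - (1 + σ) * b := by
    have : σ * (β * a + b) < σ₀ * (β * a + b) := by
      exact mul_lt_mul_of_pos_right hσσ₀ hab
    have hσ₀v : σ₀ * (β * a + b) = c / 2 := by
      rw [hσ₀def]; field_simp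
    nlinarith
  have hbr : 0 < β * a * (1 - σ) * x ^ (0:ℝ) - (1 + σ) * b * y ^ (0:ℝ)
      + β * η₁ * x ^ (θ₁ - 1) * y ^ κ₁ - η₂ * y ^ (θ₂ - 1) * x ^ κ₂ := by
    rw [rpow_zero, rpow_zero]
    have hpos : 0 < β * η₁ * x ^ (θ₁ - 1) * y ^ κ₁ := by
      have := rpow_pos_of_pos hx (θ₁ - 1); have := rpow_pos_of_pos hy κ₁; positivity
    linarith
  have t1 : 0 < (2 * β)⁻¹ * (x ^ (β * (2 * β)⁻¹) * y ^ (-(2 * β)⁻¹)) *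
      (β * a * (1 - σ) * x ^ (0:ℝ) - (1 + σ) * b * y ^ (0:ℝ)
        + β * η₁ * x ^ (θ₁ - 1) * y ^ κ₁ - η₂ * y ^ (θ₂ - 1) * x ^ κ₂) := by
    have := rpow_pos_of_pos hx (β * (2 * β)⁻¹); have := rpow_pos_of_pos hy (-(2 * β)⁻¹)
    positivity
  have t2 : 0 < b * 1 * (1 - σ) * y ^ ((1:ℝ) + 0) := by
    exact mul_pos (mul_pos (mul_pos hb one_pos) (by linarith)) (rpow_pos_of_pos hy _)
  have t3 : 0 < 1 * η₂ * y ^ ((1:ℝ) + θ₂ - 1) * x ^ κ₂ := by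
    have := rpow_pos_of_pos hy ((1:ℝ) + θ₂ - 1); have := rpow_pos_of_pos hx κ₂; positivity
  exact add_pos (add_pos t1 t2) t3
end

section
/- Assume θ₁ − 1 < κ₂(q − κ₁)/(q + 1 − θ₂). Then there exist constants β, ρ, σ₀, ε₀, z* > 0 and 0 < δ < β^{−1} such that for all 0 < σ < σ₀ and all x, y with 0 < x, y ≤ ε₀ and y x^{−β} ≥ z*, one has H̃_σ(x,y) > 0. -/
open Real

set_option maxHeartbeats 1000000 in
/-- Lemma 3.11 (case (iic)): there exist `β, ρ, σ₀, ε₀, z* > 0` and `0 < δ < β⁻¹`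
such that for all `0 < σ < σ₀`, `0 < x, y ≤ ε₀` with `y x^(−β) ≥ z*`, one has
`H̃_σ(x,y) := δ x^(βδ) y^(−δ) [βa(1−σ)x^p − (1+σ)b y^q + βη₁ x^(θ₁−1) y^(κ₁)
  − η₂ y^(θ₂−1) x^(κ₂)] + bρ(1−σ) y^(ρ+q) + ρη₂ y^(ρ+θ₂−1) x^(κ₂) > 0`. -/
theorem Htilde_pos_case_iic (a b η₁ η₂ κ₁ κ₂ p q θ₁ θ₂ : ℝ)
    (ha : 0 < a) (hb : 0 < b) (hη₁ : 0 < η₁) (hη₂ : 0 < η₂)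
    (hκ₁ : 0 < κ₁) (hκ₂ : 0 < κ₂) (hp : 0 ≤ p) (hq : 0 ≤ q)
    (hθ₁ : 1 ≤ θ₁) (hθ₂ : 0 ≤ θ₂) (hθ₂' : θ₂ < 1)
    (hcond : θ₁ - 1 < κ₂ * (q - κ₁) / (q + 1 - θ₂)) :
    ∃ β ρ σ₀ ε₀ zstar δ : ℝ,
      0 < β ∧ 0 < ρ ∧ 0 < σ₀ ∧ 0 < ε₀ ∧ 0 < zstar ∧ 0 < δ ∧ δ < β⁻¹ ∧
      ∀ σ : ℝ, 0 < σ → σ < σ₀ → ∀ x y : ℝ,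
        0 < x → x ≤ ε₀ → 0 < y → y ≤ ε₀ → y * x ^ (-β) ≥ zstar →
        0 < δ * (x ^ (β * δ) * y ^ (-δ)) *
              (β * a * (1 - σ) * x ^ p - (1 + σ) * b * y ^ q
                + β * η₁ * x ^ (θ₁ - 1) * y ^ κ₁ - η₂ * y ^ (θ₂ - 1) * x ^ κ₂)
            + b * ρ * (1 - σ) * y ^ (ρ + q) + ρ * η₂ * y ^ (ρ + θ₂ - 1) * x ^ κ₂ := by
  have hD : 0 < q + 1 - θ₂ := by linarith
  have hL : 0 < κ₁ + 1 - θ₂ := by linarith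
  have hcond' : (θ₁ - 1) * (q + 1 - θ₂) < κ₂ * (q - κ₁) := (lt_div_iff₀ hD).mp hcond
  have hκ : 0 < κ₂ - (θ₁ - 1) := by nlinarith
  -- the constants
  obtain ⟨β, hβdef⟩ : ∃ β : ℝ, β = (κ₂ - (θ₁ - 1)) / (κ₁ + 1 - θ₂) := ⟨_, rfl⟩
  have hβ : 0 < β := hβdef ▸ div_pos hκ hL
  have hβL : β * (κ₁ + 1 - θ₂) = κ₂ - (θ₁ - 1) := by
    rw [hβdef]; field_simp
  have hβD : κ₂ < β * (q + 1 - θ₂) := by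
    rw [hβdef, div_mul_eq_mul_div, lt_div_iff₀ hL]; nlinarith
  obtain ⟨δ, hδdef⟩ : ∃ δ : ℝ, δ = min 1 κ₂ / (2 * β) := ⟨_, rfl⟩
  have hmin : 0 < min 1 κ₂ := lt_min one_pos hκ₂
  have hδ : 0 < δ := hδdef ▸ div_pos hmin (by positivity)
  have hβδ : β * δ = min 1 κ₂ / 2 := by
    rw [hδdef]; field_simp
  have hβδ1 : β * δ < 1 := by
    rw [hβδ]; have := min_le_left 1 κ₂; linarith
  have hβδκ : β * δ ≤ κ₂ / 2 := by
    rw [hβδ]; have := min_le_right 1 κ₂; linarith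
  have hδβinv : δ < β⁻¹ := by
    rw [inv_eq_one_div, lt_div_iff₀ hβ]; linarith
  obtain ⟨ρ, hρdef⟩ : ∃ ρ : ℝ, ρ = δ * (β * (q + 1 - θ₂) - κ₂) / (2 * κ₂) := ⟨_, rfl⟩
  have hρ : 0 < ρ := hρdef ▸ div_pos (mul_pos hδ (by linarith)) (by positivity)
  obtain ⟨μ, hμdef⟩ : ∃ μ : ℝ, μ = 1 - β * δ / κ₂ := ⟨_, rfl⟩
  have hμ0 : 0 ≤ μ := by
    rw [hμdef]
    have : β * δ / κ₂ ≤ 1 / 2 := by rw [div_le_div_iff₀ hκ₂ two_pos]; linarith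
    linarith
  have h1μ : 0 ≤ 1 - μ := by
    rw [hμdef]
    have : 0 ≤ β * δ / κ₂ := by positivity
    linarith
  have hexp1 : κ₂ * (1 - μ) = β * δ := by
    rw [hμdef]; field_simp; ring
  have hexp2 : (ρ + q) * μ + (ρ + θ₂ - 1) * (1 - μ) = q - δ - ρ := by
    rw [hμdef, hρdef]; field_simp; ring
  obtain ⟨K₀, hK₀def⟩ : ∃ K₀ : ℝ, K₀ = (b * ρ / 2) ^ μ * (ρ * η₂) ^ (1 - μ) := ⟨_, rfl⟩
  have hK₀ : 0 < K₀ := by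
    rw [hK₀def]
    exact mul_pos (rpow_pos_of_pos (by positivity) _) (rpow_pos_of_pos (by positivity) _)
  obtain ⟨zstar, hzdef⟩ : ∃ z : ℝ, z = max 1 ((η₂ / (β * η₁)) ^ (κ₁ + 1 - θ₂)⁻¹) := ⟨_, rfl⟩
  have hz : 0 < zstar := hzdef ▸ lt_of_lt_of_le one_pos (le_max_left _ _)
  have hzL : η₂ ≤ β * η₁ * zstar ^ (κ₁ + 1 - θ₂) := by
    have hbase : 0 < η₂ / (β * η₁) := by positivity
    have h2 : ((η₂ / (β * η₁)) ^ (κ₁ + 1 - θ₂)⁻¹) ^ (κ₁ + 1 - θ₂) = η₂ / (β * η₁) := by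
      rw [← rpow_mul hbase.le, inv_mul_cancel₀ hL.ne', rpow_one]
    have h3 : ((η₂ / (β * η₁)) ^ (κ₁ + 1 - θ₂)⁻¹) ^ (κ₁ + 1 - θ₂)
        ≤ zstar ^ (κ₁ + 1 - θ₂) :=
      rpow_le_rpow (rpow_pos_of_pos hbase _).le (hzdef ▸ le_max_right _ _) hL.le
    rw [h2] at h3
    rw [div_le_iff₀ (by positivity)] at h3
    linarith
  obtain ⟨ε₀, hεdef⟩ : ∃ e : ℝ, e = min 1 ((K₀ / (2 * δ * b)) ^ ρ⁻¹) := ⟨_, rfl⟩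
  have hε : 0 < ε₀ := hεdef ▸ lt_min one_pos (rpow_pos_of_pos (by positivity) _)
  have hεK : 2 * δ * b * ε₀ ^ ρ ≤ K₀ := by
    have hbase : 0 < K₀ / (2 * δ * b) := by positivity
    have h2 : ((K₀ / (2 * δ * b)) ^ ρ⁻¹) ^ ρ = K₀ / (2 * δ * b) := by
      rw [← rpow_mul hbase.le, inv_mul_cancel₀ hρ.ne', rpow_one]
    have h3 : ε₀ ^ ρ ≤ ((K₀ / (2 * δ * b)) ^ ρ⁻¹) ^ ρ :=
      rpow_le_rpow hε.le (hεdef ▸ min_le_right _ _) hρ.le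
    rw [h2, le_div_iff₀ (by positivity)] at h3
    linarith
  refine ⟨β, ρ, 1/2, ε₀, zstar, δ, hβ, hρ, by norm_num, hε, hz, hδ, hδβinv, ?_⟩
  intro σ hσ hσ' x y hx hxε hy hyε hzxy
  have h1σ : (1:ℝ)/2 ≤ 1 - σ := by linarith
  have h1σ' : 0 < 1 - σ := by linarith
  have hxβ : 0 < x ^ β := rpow_pos_of_pos hx β
  have hxy : zstar * x ^ β ≤ y := by
    rw [ge_iff_le, rpow_neg hx.le, ← div_eq_mul_inv, le_div_iff₀ hxβ] at hzxy
    linarith only [hzxy]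
  -- part (b) : the η₂ bracket term is dominated by the η₁ one
  have hxκeq : x ^ (κ₂ - (θ₁ - 1)) = (x ^ β) ^ (κ₁ + 1 - θ₂) := by
    rw [← hβL, rpow_mul hx.le]
  have hxyd : x ^ β ≤ y / zstar := by
    rw [le_div_iff₀ hz]; linarith only [hxy]
  have hkey : η₂ * x ^ (κ₂ - (θ₁ - 1)) ≤ β * η₁ * y ^ (κ₁ + 1 - θ₂) := by
    have h4 : x ^ (κ₂ - (θ₁ - 1)) ≤ (y / zstar) ^ (κ₁ + 1 - θ₂) := by
      rw [hxκeq]; exact rpow_le_rpow hxβ.le hxyd hL.le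
    rw [div_rpow hy.le hz.le] at h4
    have h5 : η₂ * (y ^ (κ₁ + 1 - θ₂) / zstar ^ (κ₁ + 1 - θ₂))
        ≤ β * η₁ * y ^ (κ₁ + 1 - θ₂) := by
      rw [mul_div_assoc', div_le_iff₀ (rpow_pos_of_pos hz _)]
      have h6 := mul_le_mul_of_nonneg_right hzL (rpow_pos_of_pos hy (κ₁ + 1 - θ₂)).le
      linarith only [h6]
    exact le_trans (mul_le_mul_of_nonneg_left h4 hη₂.le) h5
  have hxsplit : x ^ κ₂ = x ^ (θ₁ - 1) * x ^ (κ₂ - (θ₁ - 1)) := by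
    rw [← rpow_add hx]; ring_nf
  have hysplit : y ^ κ₁ = y ^ (θ₂ - 1) * y ^ (κ₁ + 1 - θ₂) := by
    rw [← rpow_add hy]; ring_nf
  have hbineq : η₂ * y ^ (θ₂ - 1) * x ^ κ₂ ≤ β * η₁ * x ^ (θ₁ - 1) * y ^ κ₁ := by
    rw [hxsplit, hysplit]
    have h := mul_le_mul_of_nonneg_left hkey
      (by positivity : (0:ℝ) ≤ x ^ (θ₁ - 1) * y ^ (θ₂ - 1))
    linarith only [h]
  -- part (c) : the b y^q bracket term is dominated by the two outer terms
  set C := b * ρ * (1 - σ) * y ^ (ρ + q) with hCdef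
  set Bt := ρ * η₂ * y ^ (ρ + θ₂ - 1) * x ^ κ₂ with hBdef
  have hC : 0 ≤ C := by
    rw [hCdef]
    exact mul_nonneg (mul_nonneg (mul_nonneg hb.le hρ.le) h1σ'.le)
      (rpow_pos_of_pos hy _).le
  have hB : 0 ≤ Bt := by rw [hBdef]; positivity
  have hamgm : C ^ μ * Bt ^ (1 - μ) ≤ C + Bt := by
    have h := Real.geom_mean_le_arith_mean2_weighted hμ0 h1μ hC hB (by ring)
    have a1 : 0 ≤ (1 - μ) * C := mul_nonneg h1μ hC
    have a2 : 0 ≤ μ * Bt := mul_nonneg hμ0 hB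
    linarith only [h, a1, a2]
  have h0C : (0:ℝ) ≤ b * ρ * (1 - σ) :=
    mul_nonneg (mul_nonneg hb.le hρ.le) h1σ'.le
  have e1 : (y ^ (ρ + q)) ^ μ = y ^ ((ρ + q) * μ) := (rpow_mul hy.le _ _).symm
  have e2 : (y ^ (ρ + θ₂ - 1)) ^ (1 - μ) = y ^ ((ρ + θ₂ - 1) * (1 - μ)) :=
    (rpow_mul hy.le _ _).symm
  have e3 : (x ^ κ₂) ^ (1 - μ) = x ^ (β * δ) := by
    rw [← rpow_mul hx.le, hexp1]
  have e4 : y ^ ((ρ + q) * μ) * y ^ ((ρ + θ₂ - 1) * (1 - μ)) = y ^ (q - δ - ρ) := by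
    rw [← rpow_add hy, hexp2]
  have hCp : C ^ μ = (b * ρ * (1 - σ)) ^ μ * y ^ ((ρ + q) * μ) := by
    rw [hCdef, mul_rpow h0C (rpow_pos_of_pos hy _).le, e1]
  have hBp : Bt ^ (1 - μ) = (ρ * η₂) ^ (1 - μ) * y ^ ((ρ + θ₂ - 1) * (1 - μ)) * x ^ (β * δ) := by
    rw [hBdef, mul_rpow (by positivity) (rpow_pos_of_pos hx _).le,
      mul_rpow (by positivity) (rpow_pos_of_pos hy _).le, e2, e3]
  have hprod : C ^ μ * Bt ^ (1 - μ)
      = ((b * ρ * (1 - σ)) ^ μ * (ρ * η₂) ^ (1 - μ)) * (y ^ (q - δ - ρ) * x ^ (β * δ)) := by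
    rw [hCp, hBp, ← e4]; ring
  have hKσ : K₀ ≤ (b * ρ * (1 - σ)) ^ μ * (ρ * η₂) ^ (1 - μ) := by
    rw [hK₀def]
    have hbρ : b * ρ / 2 ≤ b * ρ * (1 - σ) := by
      have h := mul_le_mul_of_nonneg_right h1σ (mul_pos hb hρ).le
      linarith only [h]
    have h : (b * ρ / 2) ^ μ ≤ (b * ρ * (1 - σ)) ^ μ :=
      rpow_le_rpow (by positivity) hbρ hμ0
    exact mul_le_mul_of_nonneg_right h (rpow_pos_of_pos (by positivity) _).le
  have hcoef : δ * (1 + σ) * b * y ^ ρ ≤ K₀ := by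
    have h6 : y ^ ρ ≤ ε₀ ^ ρ := rpow_le_rpow hy.le hyε hρ.le
    have h7 : 0 < y ^ ρ := rpow_pos_of_pos hy ρ
    have h8 : 0 ≤ 2 * δ * b * (ε₀ ^ ρ - y ^ ρ) :=
      mul_nonneg (by positivity) (by linarith only [h6])
    have a3 : 0 ≤ (1 - σ) * (δ * b * y ^ ρ) :=
      mul_nonneg h1σ'.le (mul_pos (mul_pos hδ hb) h7).le
    linarith only [hεK, h8, a3]
  have hysp : y ^ (-δ) * y ^ q = y ^ ρ * y ^ (q - δ - ρ) := by
    rw [← rpow_add hy, ← rpow_add hy]; ring_nf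
  have hcineq : δ * (x ^ (β * δ) * y ^ (-δ)) * ((1 + σ) * b * y ^ q) ≤ C + Bt := by
    have h8 : δ * (x ^ (β * δ) * y ^ (-δ)) * ((1 + σ) * b * y ^ q)
        = (δ * (1 + σ) * b * y ^ ρ) * (y ^ (q - δ - ρ) * x ^ (β * δ)) := by
      linear_combination (δ * (1 + σ) * b * x ^ (β * δ)) * hysp
    have h9 : (δ * (1 + σ) * b * y ^ ρ) * (y ^ (q - δ - ρ) * x ^ (β * δ))
        ≤ K₀ * (y ^ (q - δ - ρ) * x ^ (β * δ)) :=
      mul_le_mul_of_nonneg_right hcoef (by positivity)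
    have h10 : K₀ * (y ^ (q - δ - ρ) * x ^ (β * δ))
        ≤ ((b * ρ * (1 - σ)) ^ μ * (ρ * η₂) ^ (1 - μ)) * (y ^ (q - δ - ρ) * x ^ (β * δ)) :=
      mul_le_mul_of_nonneg_right hKσ (by positivity)
    rw [h8]
    refine le_trans h9 (le_trans h10 ?_)
    rw [← hprod]
    exact hamgm
  -- assembly
  have hP : (0:ℝ) ≤ δ * (x ^ (β * δ) * y ^ (-δ)) := by positivity
  have hT1 : 0 < δ * (x ^ (β * δ) * y ^ (-δ)) * (β * a * (1 - σ) * x ^ p) := by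
    apply mul_pos (mul_pos hδ (mul_pos (rpow_pos_of_pos hx _) (rpow_pos_of_pos hy _)))
    exact mul_pos (mul_pos (mul_pos hβ ha) h1σ') (rpow_pos_of_pos hx _)
  have h34 : δ * (x ^ (β * δ) * y ^ (-δ)) * (η₂ * y ^ (θ₂ - 1) * x ^ κ₂)
      ≤ δ * (x ^ (β * δ) * y ^ (-δ)) * (β * η₁ * x ^ (θ₁ - 1) * y ^ κ₁) :=
    mul_le_mul_of_nonneg_left hbineq hP
  have expand : δ * (x ^ (β * δ) * y ^ (-δ)) *
        (β * a * (1 - σ) * x ^ p - (1 + σ) * b * y ^ q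
          + β * η₁ * x ^ (θ₁ - 1) * y ^ κ₁ - η₂ * y ^ (θ₂ - 1) * x ^ κ₂) + C + Bt
      = δ * (x ^ (β * δ) * y ^ (-δ)) * (β * a * (1 - σ) * x ^ p)
        + (δ * (x ^ (β * δ) * y ^ (-δ)) * (β * η₁ * x ^ (θ₁ - 1) * y ^ κ₁)
            - δ * (x ^ (β * δ) * y ^ (-δ)) * (η₂ * y ^ (θ₂ - 1) * x ^ κ₂))
        + ((C + Bt) - δ * (x ^ (β * δ) * y ^ (-δ)) * ((1 + σ) * b * y ^ q)) := by
    ring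
  rw [expand]
  exact add_pos_of_pos_of_nonneg
    (add_pos_of_pos_of_nonneg hT1 (sub_nonneg.mpr h34)) (sub_nonneg.mpr hcineq)
end
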